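/- arXiv:2310.07808 — 5 statements merged into one kernel-verified Lean document; each statement's English description precedes it below -/
import Mathlib

section
/- Let a < b be real numbers, let N ≥ 1 be an integer, and let f : [a,b] → ℝ be N times continuously differentiable on [a,b]. Let x_1, …, x_N be the roots of the degree-N Chebyshev polynomial shifted to [a,b], namely x_i = (a+b)/2 + ((b−a)/2)·cos((2i−1)π/(2N)) for i = 1, …, N, and let P be the unique polynomial of degree at most N−1 satisfying P(x_i) = f(x_i) for all i. Then for every ζ ∈ [a,b], |f(ζ) − P(ζ)| ≤ ((b−a)^N / (N! · 2^{2N−1})) · sup_{ξ∈[a,b]} |f^{(N)}(ξ)|. -/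
open Polynomial Real Set

lemma my_iterated_rolle (n : ℕ) : ∀ (a b : ℝ), a < b → ∀ g : ℝ → ℝ,
    ContDiffOn ℝ n g (Set.Icc a b) →
    ∀ S : Finset ℝ, S.card = n + 1 → ↑S ⊆ Set.Icc a b → (∀ y ∈ S, g y = 0) →
    ∃ ξ ∈ Set.Icc a b, iteratedDerivWithin n g (Set.Icc a b) ξ = 0 := by
  induction n with
  | zero =>
    intro a b hab g hg S hcard hsub hz
    obtain ⟨y, hy⟩ := Finset.card_pos.mp (by omega : 0 < S.card)
    exact ⟨y, hsub hy, by simpa [iteratedDerivWithin_zero] using hz y hy⟩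
  | succ n IH =>
    intro a b hab g hg S hcard hsub hz
    have hu : UniqueDiffOn ℝ (Set.Icc a b) := uniqueDiffOn_Icc hab
    set e := S.orderIsoOfFin hcard with he
    have key : ∀ i : Fin (n+1), ∃ c,
        c ∈ Set.Ioo ((e i.castSucc : ℝ)) ((e i.succ : ℝ)) ∧ deriv g c = 0 := by
      intro i
      have hlt : ((e i.castSucc : ℝ)) < ((e i.succ : ℝ)) := by
        exact_mod_cast e.strictMono Fin.castSucc_lt_succ
      have hc : ContinuousOn g (Set.Icc ((e i.castSucc : ℝ)) ((e i.succ : ℝ))) :=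
        hg.continuousOn.mono (Set.Icc_subset_Icc (hsub (e i.castSucc).2).1 (hsub (e i.succ).2).2)
      exact exists_deriv_eq_zero hlt hc
        (by rw [hz _ (e i.castSucc).2, hz _ (e i.succ).2])
    choose c hc1 hc2 using key
    have hcmem : ∀ i, c i ∈ Set.Ioo a b := fun i =>
      ⟨lt_of_le_of_lt (hsub (e i.castSucc).2).1 (hc1 i).1,
       lt_of_lt_of_le (hc1 i).2 (hsub (e i.succ).2).2⟩
    have hcmono : StrictMono c := by
      intro i j hij
      calc c i < ((e i.succ : ℝ)) := (hc1 i).2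
        _ ≤ ((e j.castSucc : ℝ)) := by
            have : i.succ ≤ j.castSucc := by
              exact Fin.succ_le_castSucc_iff.mpr hij
            exact_mod_cast e.monotone this
        _ < c j := (hc1 j).1
    set g' := derivWithin g (Set.Icc a b) with hg'def
    have hg' : ContDiffOn ℝ n g' (Set.Icc a b) := by
      apply hg.derivWithin hu
      exact_mod_cast le_refl ((n : WithTop ℕ∞) + 1)
    have hz' : ∀ i : Fin (n+1), g' (c i) = 0 := by
      intro i
      have hmem : Set.Icc a b ∈ nhds (c i) := Icc_mem_nhds (hcmem i).1 (hcmem i).2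
      rw [hg'def, derivWithin_of_mem_nhds hmem, hc2 i]
    obtain ⟨ξ, hξ, hξ0⟩ := IH a b hab g' hg'
      (Finset.image c Finset.univ)
      (by rw [Finset.card_image_of_injective _ hcmono.injective, Finset.card_univ,
          Fintype.card_fin])
      (by intro y hy
          simp only [Finset.coe_image, Set.mem_image, Finset.mem_coe, Finset.mem_univ] at hy
          obtain ⟨i, -, rfl⟩ := hy
          exact Set.Ioo_subset_Icc_self (hcmem i))
      (by intro y hy
          simp only [Finset.mem_image, Finset.mem_univ, true_and] at hy
          obtain ⟨i, rfl⟩ := hy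
          exact hz' i)
    exact ⟨ξ, hξ, by rw [iteratedDerivWithin_succ']; exact hξ0⟩

lemma my_poly_contDiff (p : Polynomial ℝ) (n : WithTop ℕ∞) :
    ContDiff ℝ n (fun y => p.eval y) := by
  induction p using Polynomial.induction_on' with
  | add p q hp hq => simpa using hp.add hq
  | monomial k c =>
    simpa [Polynomial.eval_monomial] using (contDiff_const (c := c)).mul (contDiff_id.pow k)

lemma my_poly_iteratedDerivWithin (a b : ℝ) (hab : a < b) (n : ℕ) :
    ∀ (Q : Polynomial ℝ), ∀ x ∈ Set.Icc a b,
      iteratedDerivWithin n (fun y => Q.eval y) (Set.Icc a b) x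
        = (Polynomial.derivative^[n] Q).eval x := by
  have hu : UniqueDiffOn ℝ (Set.Icc a b) := uniqueDiffOn_Icc hab
  induction n with
  | zero => simp
  | succ n IH =>
    intro Q x hx
    rw [iteratedDerivWithin_succ']
    have heq : Set.EqOn (derivWithin (fun y => Q.eval y) (Set.Icc a b))
        (fun y => Q.derivative.eval y) (Set.Icc a b) := by
      intro y hy
      rw [(Polynomial.differentiableAt (p := Q)).derivWithin (hu y hy)]
      exact Polynomial.deriv (p := Q)
    rw [iteratedDerivWithin_congr heq hx, IH Q.derivative x hx,
      Function.iterate_succ_apply]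

lemma my_poly_iterate_deriv (N : ℕ) (hN : 1 ≤ N) (x : ℕ → ℝ) (P : Polynomial ℝ)
    (hPdeg : P.natDegree ≤ N - 1) (lam : ℝ) :
    Polynomial.derivative^[N]
      (P + Polynomial.C lam * ∏ i ∈ Finset.Icc 1 N, (Polynomial.X - Polynomial.C (x i)))
      = Polynomial.C (lam * N.factorial) := by
  set W : Polynomial ℝ := ∏ i ∈ Finset.Icc 1 N, (Polynomial.X - Polynomial.C (x i)) with hW
  have hWm : W.Monic := monic_prod_of_monic _ _ fun i _ => monic_X_sub_C (x i)
  have hWdeg : W.natDegree = N := by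
    rw [hW, natDegree_prod _ _ fun i _ => X_sub_C_ne_zero (x i)]
    simp [Nat.card_Icc]
  have hP0 : Polynomial.derivative^[N] P = 0 :=
    Polynomial.iterate_derivative_eq_zero (by omega)
  have hXW : Polynomial.derivative^[N] (W - Polynomial.X ^ N) = 0 := by
    apply Polynomial.iterate_derivative_eq_zero
    rcases eq_or_ne (W - Polynomial.X ^ N) 0 with h | h
    · simpa [h] using (show 0 < N by omega)
    · have hdeq : W.degree = (Polynomial.X ^ N : Polynomial ℝ).degree := by
        rw [Polynomial.degree_eq_natDegree hWm.ne_zero, hWdeg, Polynomial.degree_X_pow]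
      have hdlt := Polynomial.degree_sub_lt hdeq hWm.ne_zero
        (by rw [hWm.leadingCoeff, Polynomial.leadingCoeff_X_pow])
      rw [Polynomial.degree_eq_natDegree hWm.ne_zero, hWdeg] at hdlt
      exact (Polynomial.natDegree_lt_iff_degree_lt h).mpr hdlt
  have hXN : Polynomial.derivative^[N] (Polynomial.X ^ N : Polynomial ℝ)
      = Polynomial.C (N.factorial : ℝ) := by
    rw [Polynomial.iterate_derivative_X_pow_eq_C_mul, Nat.descFactorial_self, Nat.sub_self,
      pow_zero, mul_one]
  have hWN : Polynomial.derivative^[N] W = Polynomial.C (N.factorial : ℝ) := by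
    have hsplit : W = (W - Polynomial.X ^ N) + Polynomial.X ^ N := by ring
    rw [hsplit, iterate_map_add, hXW, hXN, zero_add]
  rw [iterate_map_add, hP0, zero_add,
    Polynomial.iterate_derivative_C_mul, hWN, ← Polynomial.C_mul]

lemma my_cheb_deg (n : ℕ) :
    (Polynomial.Chebyshev.T ℝ ((n : ℤ) + 1) - 2 ^ n * Polynomial.X ^ (n + 1)).natDegree ≤ n := by
  induction n using Nat.strong_induction_on with
  | _ n IH =>
    match n with
    | 0 => simp [Polynomial.Chebyshev.T_one]
    | 1 =>
      have h2 : ((1 : ℕ) : ℤ) + 1 = 2 := by norm_num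
      rw [h2, Polynomial.Chebyshev.T_two]
      have : (2 * Polynomial.X ^ 2 - 1 - 2 ^ 1 * Polynomial.X ^ (1 + 1) : ℝ[X]) = -1 := by ring
      rw [this]
      simp
    | (n + 2) =>
      have h1 := IH n (by omega)
      have h2 := IH (n + 1) (by omega)
      have hT1 : (Polynomial.Chebyshev.T ℝ ((n : ℤ) + 1)).natDegree ≤ n + 1 := by
        have he : Polynomial.Chebyshev.T ℝ ((n : ℤ) + 1)
            = (Polynomial.Chebyshev.T ℝ ((n : ℤ) + 1) - 2 ^ n * Polynomial.X ^ (n + 1))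
              + 2 ^ n * Polynomial.X ^ (n + 1) := by ring
        rw [he]
        refine le_trans (Polynomial.natDegree_add_le _ _) ?_
        refine max_le (le_trans h1 (by omega)) ?_
        refine le_trans (Polynomial.natDegree_mul_le) ?_
        simp [Polynomial.natDegree_pow]
      have hrec := Polynomial.Chebyshev.T_add_two ℝ ((n : ℤ) + 1)
      have hidx : ((n : ℤ) + 1) + 2 = ((n + 2 : ℕ) : ℤ) + 1 := by push_cast; ring
      have hidx2 : ((n : ℤ) + 1) + 1 = ((n + 1 : ℕ) : ℤ) + 1 := by push_cast; ring
      rw [hidx, hidx2] at hrec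
      have hsplit : Polynomial.Chebyshev.T ℝ (((n + 2 : ℕ) : ℤ) + 1)
            - 2 ^ (n + 2) * Polynomial.X ^ (n + 2 + 1)
          = 2 * Polynomial.X *
              (Polynomial.Chebyshev.T ℝ (((n + 1 : ℕ) : ℤ) + 1)
                - 2 ^ (n + 1) * Polynomial.X ^ (n + 1 + 1))
            - Polynomial.Chebyshev.T ℝ ((n : ℤ) + 1) := by
        rw [hrec]; ring
      rw [hsplit]
      refine le_trans (Polynomial.natDegree_sub_le _ _) ?_
      refine max_le ?_ (le_trans hT1 (by omega))
      refine le_trans (Polynomial.natDegree_mul_le) ?_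
      have hx1 : (2 * Polynomial.X : ℝ[X]).natDegree ≤ 1 :=
        le_trans (Polynomial.natDegree_mul_le) (by simp)
      omega

lemma my_theta_mem (N : ℕ) (hN : 1 ≤ N) {i : ℕ} (hi : i ∈ Finset.Icc 1 N) :
    (2 * (i : ℝ) - 1) * π / (2 * N) ∈ Set.Ioo 0 π := by
  simp only [Finset.mem_Icc] at hi
  have h1 : (1 : ℝ) ≤ (i : ℝ) := by exact_mod_cast hi.1
  have h2 : (i : ℝ) ≤ (N : ℝ) := by exact_mod_cast hi.2
  have hNpos : (0 : ℝ) < N := by positivity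
  constructor
  · apply div_pos (by nlinarith [Real.pi_pos]) (by positivity)
  · rw [div_lt_iff₀ (by positivity)]
    nlinarith [Real.pi_pos]

lemma my_cos_inj (N : ℕ) (hN : 1 ≤ N) :
    Set.InjOn (fun i : ℕ => Real.cos ((2 * (i : ℝ) - 1) * π / (2 * N)))
      ((Finset.Icc 1 N : Finset ℕ) : Set ℕ) := by
  intro i hi j hj hij
  simp only [Finset.coe_Icc, Set.mem_Icc] at hi hj
  have hmi := my_theta_mem N hN (i := i) (by simp [Finset.mem_Icc]; omega)
  have hmj := my_theta_mem N hN (i := j) (by simp [Finset.mem_Icc]; omega)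
  have hteq := Real.strictAntiOn_cos.injOn
    (Set.mem_Icc.mpr ⟨hmi.1.le, hmi.2.le⟩) (Set.mem_Icc.mpr ⟨hmj.1.le, hmj.2.le⟩) hij
  have hNpos : (0 : ℝ) < N := by positivity
  have hpi := Real.pi_pos
  have hc : (0 : ℝ) < π / (2 * N) := by positivity
  field_simp at hteq
  exact_mod_cast (by linarith : (i : ℝ) = j)

lemma my_cheb_root (N : ℕ) (hN : 1 ≤ N) {i : ℕ} (hi : i ∈ Finset.Icc 1 N) :
    (Polynomial.Chebyshev.T ℝ (N : ℤ)).eval (Real.cos ((2 * (i : ℝ) - 1) * π / (2 * N))) = 0 := by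
  rw [Polynomial.Chebyshev.T_real_cos]
  have hNpos : (0 : ℝ) < N := by positivity
  have harg : ((N : ℤ) : ℝ) * ((2 * (i : ℝ) - 1) * π / (2 * N)) = (2 * (i : ℝ) - 1) * π / 2 := by
    push_cast
    field_simp
  rw [harg, Real.cos_eq_zero_iff]
  simp only [Finset.mem_Icc] at hi
  exact ⟨(i : ℤ) - 1, by push_cast [hi.1]; ring⟩

lemma my_cheb_factor (N : ℕ) (hN : 1 ≤ N) :
    Polynomial.Chebyshev.T ℝ (N : ℤ)
      = 2 ^ (N - 1) *
        ∏ i ∈ Finset.Icc 1 N, (Polynomial.X - Polynomial.C (Real.cos ((2 * (i : ℝ) - 1) * π / (2 * N)))) := by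
  set W : Polynomial ℝ :=
    ∏ i ∈ Finset.Icc 1 N, (Polynomial.X - Polynomial.C (Real.cos ((2 * (i : ℝ) - 1) * π / (2 * N)))) with hW
  have hWm : W.Monic := monic_prod_of_monic _ _ fun i _ => monic_X_sub_C _
  have hWdeg : W.natDegree = N := by
    rw [hW, natDegree_prod _ _ fun i _ => X_sub_C_ne_zero _]
    simp [Nat.card_Icc]
  set D : Polynomial ℝ := Polynomial.Chebyshev.T ℝ (N : ℤ) - 2 ^ (N - 1) * W with hD
  have hDdeg : D.natDegree < N := by
    have hcd := my_cheb_deg (N - 1)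
    have hidx : ((N - 1 : ℕ) : ℤ) + 1 = (N : ℤ) := by omega
    have hexp : (N - 1) + 1 = N := by omega
    rw [hidx, hexp] at hcd
    have hsplit : D = (Polynomial.Chebyshev.T ℝ (N : ℤ) - 2 ^ (N - 1) * Polynomial.X ^ N)
        + 2 ^ (N - 1) * (Polynomial.X ^ N - W) := by rw [hD]; ring
    have hXW : (Polynomial.X ^ N - W : ℝ[X]).natDegree < N := by
      rcases eq_or_ne (Polynomial.X ^ N - W : ℝ[X]) 0 with h | h
      · rw [h]; simpa using (show 0 < N by omega)
      · have hdeq : (Polynomial.X ^ N : ℝ[X]).degree = W.degree := by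
          rw [Polynomial.degree_eq_natDegree hWm.ne_zero, hWdeg, Polynomial.degree_X_pow]
        have hdlt := Polynomial.degree_sub_lt hdeq (pow_ne_zero N Polynomial.X_ne_zero)
          (by rw [hWm.leadingCoeff, Polynomial.leadingCoeff_X_pow])
        rw [Polynomial.degree_X_pow] at hdlt
        exact (Polynomial.natDegree_lt_iff_degree_lt h).mpr hdlt
    rw [hsplit]
    calc ((Polynomial.Chebyshev.T ℝ (N : ℤ) - 2 ^ (N - 1) * Polynomial.X ^ N)
        + 2 ^ (N - 1) * (Polynomial.X ^ N - W)).natDegree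
        ≤ max (Polynomial.Chebyshev.T ℝ (N : ℤ) - 2 ^ (N - 1) * Polynomial.X ^ N).natDegree
            (2 ^ (N - 1) * (Polynomial.X ^ N - W) : ℝ[X]).natDegree :=
          Polynomial.natDegree_add_le _ _
      _ < N := by
          refine max_lt (by omega) ?_
          refine lt_of_le_of_lt (Polynomial.natDegree_mul_le) ?_
          have : ((2 : ℝ[X]) ^ (N - 1)).natDegree = 0 := by
            simp [Polynomial.natDegree_pow]
          omega
  have hDzero : D = 0 := by
    apply Polynomial.eq_zero_of_natDegree_lt_card_of_eval_eq_zero' D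
      ((Finset.Icc 1 N).image (fun i : ℕ => Real.cos ((2 * (i : ℝ) - 1) * π / (2 * N))))
    · intro y hy
      simp only [Finset.mem_image] at hy
      obtain ⟨i, hi, rfl⟩ := hy
      rw [hD]
      simp only [Polynomial.eval_sub, Polynomial.eval_mul, Polynomial.eval_pow]
      rw [my_cheb_root N hN hi, hW]
      rw [Polynomial.eval_prod]
      rw [Finset.prod_eq_zero hi (by simp)]
      simp
    · rw [Finset.card_image_of_injOn (my_cos_inj N hN), Nat.card_Icc]
      omega
  have := sub_eq_zero.mp hDzero
  exact this

lemma my_cheb_eval_bound (N : ℕ) (hN : 1 ≤ N) (u : ℝ) (hu : u ∈ Set.Icc (-1 : ℝ) 1) :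
    |∏ i ∈ Finset.Icc 1 N, (u - Real.cos ((2 * (i : ℝ) - 1) * π / (2 * N)))| ≤ 1 / 2 ^ (N - 1) := by
  have hfac := my_cheb_factor N hN
  have heval := congrArg (Polynomial.eval u) hfac
  simp only [Polynomial.eval_mul, Polynomial.eval_pow, Polynomial.eval_ofNat,
    Polynomial.eval_prod, Polynomial.eval_sub, Polynomial.eval_X, Polynomial.eval_C] at heval
  have hT : |(Polynomial.Chebyshev.T ℝ (N : ℤ)).eval u| ≤ 1 := by
    have hcos : Real.cos (Real.arccos u) = u := Real.cos_arccos hu.1 hu.2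
    rw [← hcos, Polynomial.Chebyshev.T_real_cos]
    exact Real.abs_cos_le_one _
  have h2 : (0 : ℝ) < 2 ^ (N - 1) := by positivity
  have hprod : ∏ i ∈ Finset.Icc 1 N, (u - Real.cos ((2 * (i : ℝ) - 1) * π / (2 * N)))
      = (Polynomial.Chebyshev.T ℝ (N : ℤ)).eval u / 2 ^ (N - 1) := by
    rw [heval, mul_div_cancel_left₀ _ h2.ne']
  rw [hprod, abs_div, abs_of_pos h2]
  gcongr

lemma my_node_prod_bound (a b : ℝ) (hab : a < b) (N : ℕ) (hN : 1 ≤ N) (x : ℕ → ℝ)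
    (hx : ∀ i ∈ Finset.Icc 1 N,
      x i = (a + b) / 2 + ((b - a) / 2) * Real.cos ((2 * (i : ℝ) - 1) * Real.pi / (2 * N)))
    (y : ℝ) (hy : y ∈ Set.Icc a b) :
    |∏ i ∈ Finset.Icc 1 N, (y - x i)| ≤ (b - a) ^ N / 2 ^ (2 * N - 1) := by
  have hr : (0 : ℝ) < (b - a) / 2 := by linarith
  set u : ℝ := (y - (a + b) / 2) / ((b - a) / 2) with husu
  have hu : u ∈ Set.Icc (-1 : ℝ) 1 := by
    constructor
    · rw [husu, le_div_iff₀ hr]; obtain ⟨h1, h2⟩ := hy; linarith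
    · rw [husu, div_le_iff₀ hr]; obtain ⟨h1, h2⟩ := hy; linarith
  have hterm : ∀ i ∈ Finset.Icc 1 N,
      y - x i = ((b - a) / 2) * (u - Real.cos ((2 * (i : ℝ) - 1) * π / (2 * N))) := by
    intro i hi
    have hba : b - a ≠ 0 := ne_of_gt (by linarith)
    rw [hx i hi, husu]
    field_simp
    ring
  rw [Finset.prod_congr rfl hterm, Finset.prod_mul_distrib, Finset.prod_const, Nat.card_Icc]
  have hcard : N + 1 - 1 = N := by omega
  rw [hcard, abs_mul, abs_pow, abs_of_pos hr]
  have hb := my_cheb_eval_bound N hN u hu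
  calc ((b - a) / 2) ^ N * |∏ i ∈ Finset.Icc 1 N, (u - Real.cos ((2 * (i : ℝ) - 1) * π / (2 * N)))|
      ≤ ((b - a) / 2) ^ N * (1 / 2 ^ (N - 1)) := by
        apply mul_le_mul_of_nonneg_left hb (by positivity)
    _ = (b - a) ^ N / 2 ^ (2 * N - 1) := by
        rw [div_pow]
        have h2N : (2 : ℝ) ^ (2 * N - 1) = 2 ^ N * 2 ^ (N - 1) := by
          rw [← pow_add]
          congr 1
          omega
        rw [h2N]
        field_simp
  done

/-- Chebyshev-node interpolation error bound (Lemma 7.1 of the paper):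
if `f` is `N` times continuously differentiable on `[a,b]` and `P` is the
polynomial of degree at most `N-1` interpolating `f` at the roots of the
degree-`N` Chebyshev polynomial shifted to `[a,b]`, then
`|f ζ - P ζ| ≤ (b-a)^N / (N! 2^(2N-1)) · sup_{ξ∈[a,b]} |f^{(N)} ξ|`. -/
theorem chebyshev_interpolation_error
    (a b : ℝ) (hab : a < b) (N : ℕ) (hN : 1 ≤ N)
    (f : ℝ → ℝ) (hf : ContDiffOn ℝ N f (Set.Icc a b))
    (x : ℕ → ℝ)
    (hx : ∀ i ∈ Finset.Icc 1 N,
      x i = (a + b) / 2 + ((b - a) / 2) * Real.cos ((2 * (i : ℝ) - 1) * Real.pi / (2 * N)))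
    (P : Polynomial ℝ) (hPdeg : P.natDegree ≤ N - 1)
    (hPinterp : ∀ i ∈ Finset.Icc 1 N, P.eval (x i) = f (x i)) :
    ∀ ζ ∈ Set.Icc a b,
      |f ζ - P.eval ζ| ≤
        (b - a) ^ N / (N.factorial * 2 ^ (2 * N - 1)) *
          sSup ((fun ξ => |iteratedDerivWithin N f (Set.Icc a b) ξ|) '' Set.Icc a b) := by
  intro ζ hζ
  have hu : UniqueDiffOn ℝ (Set.Icc a b) := uniqueDiffOn_Icc hab
  have hcont : ContinuousOn (fun ξ => |iteratedDerivWithin N f (Set.Icc a b) ξ|) (Set.Icc a b) :=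
    (hf.continuousOn_iteratedDerivWithin le_rfl hu).abs
  set M := sSup ((fun ξ => |iteratedDerivWithin N f (Set.Icc a b) ξ|) '' Set.Icc a b) with hMdef
  have hbdd : BddAbove ((fun ξ => |iteratedDerivWithin N f (Set.Icc a b) ξ|) '' Set.Icc a b) :=
    (isCompact_Icc.image_of_continuousOn hcont).bddAbove
  have hM : ∀ ξ ∈ Set.Icc a b, |iteratedDerivWithin N f (Set.Icc a b) ξ| ≤ M :=
    fun ξ hξ => le_csSup hbdd ⟨ξ, hξ, rfl⟩
  have hM0 : 0 ≤ M := (abs_nonneg _).trans (hM a (left_mem_Icc.mpr hab.le))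
  by_cases hcase : ∃ i ∈ Finset.Icc 1 N, ζ = x i
  · obtain ⟨i, hi, rfl⟩ := hcase
    rw [hPinterp i hi, sub_self, abs_zero]
    exact mul_nonneg (div_nonneg (pow_nonneg (by linarith) N) (by positivity)) hM0
  · push_neg at hcase
    set W : Polynomial ℝ := ∏ i ∈ Finset.Icc 1 N, (Polynomial.X - Polynomial.C (x i)) with hWdef
    have hWeval : ∀ y : ℝ, W.eval y = ∏ i ∈ Finset.Icc 1 N, (y - x i) := by
      intro y; rw [hWdef, Polynomial.eval_prod]; simp
    have hWζ : W.eval ζ ≠ 0 := by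
      rw [hWeval]
      exact Finset.prod_ne_zero_iff.mpr fun i hi => sub_ne_zero.mpr (hcase i hi)
    set lam : ℝ := (f ζ - P.eval ζ) / W.eval ζ with hlamdef
    set Q : Polynomial ℝ := P + Polynomial.C lam * W with hQdef
    set g : ℝ → ℝ := f - fun t => Q.eval t with hgdef
    have hgC : ContDiffOn ℝ N g (Set.Icc a b) :=
      hf.sub ((my_poly_contDiff Q N).contDiffOn)
    -- nodes in the interval, injective
    have hnodes : ∀ i ∈ Finset.Icc 1 N, x i ∈ Set.Icc a b := by
      intro i hi
      rw [hx i hi]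
      have h1 := Real.neg_one_le_cos ((2 * (i : ℝ) - 1) * π / (2 * N))
      have h2 := Real.cos_le_one ((2 * (i : ℝ) - 1) * π / (2 * N))
      constructor <;> nlinarith
    have hxinj : Set.InjOn x ((Finset.Icc 1 N : Finset ℕ) : Set ℕ) := by
      intro i hi j hj hij
      apply my_cos_inj N hN hi hj
      have hi' : i ∈ Finset.Icc 1 N := by simpa using hi
      have hj' : j ∈ Finset.Icc 1 N := by simpa using hj
      rw [hx i hi', hx j hj'] at hij
      have hr : (b - a) / 2 ≠ 0 := ne_of_gt (by linarith)
      simp only []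
      have := add_left_cancel hij
      exact mul_left_cancel₀ hr this
    -- the zero set
    set S : Finset ℝ := insert ζ ((Finset.Icc 1 N).image x) with hSdef
    have hζnot : ζ ∉ (Finset.Icc 1 N).image x := by
      simp only [Finset.mem_image, not_exists]
      rintro i ⟨hi, hxi⟩
      exact hcase i hi hxi.symm
    have hcard : S.card = N + 1 := by
      rw [hSdef, Finset.card_insert_of_notMem hζnot, Finset.card_image_of_injOn hxinj,
        Nat.card_Icc]
      omega
    have hSsub : ↑S ⊆ Set.Icc a b := by
      intro y hy
      simp only [hSdef, Finset.coe_insert, Set.mem_insert_iff, Finset.coe_image,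
        Set.mem_image, Finset.mem_coe] at hy
      rcases hy with rfl | ⟨i, hi, rfl⟩
      · exact hζ
      · exact hnodes i (by simpa using hi)
    have hWnode : ∀ i ∈ Finset.Icc 1 N, W.eval (x i) = 0 := by
      intro i hi
      rw [hWeval]
      exact Finset.prod_eq_zero hi (by simp)
    have hSz : ∀ y ∈ S, g y = 0 := by
      intro y hy
      simp only [hSdef, Finset.mem_insert, Finset.mem_image] at hy
      rcases hy with rfl | ⟨i, hi, rfl⟩
      · simp only [hgdef, Pi.sub_apply, hQdef, Polynomial.eval_add, Polynomial.eval_mul,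
          Polynomial.eval_C]
        rw [hlamdef]
        field_simp
        ring
      · simp only [hgdef, Pi.sub_apply, hQdef, Polynomial.eval_add, Polynomial.eval_mul,
          Polynomial.eval_C]
        rw [hWnode i hi, hPinterp i hi]
        ring
    obtain ⟨ξ, hξ, hξ0⟩ := my_iterated_rolle N a b hab g hgC S hcard hSsub hSz
    have hsplit : iteratedDerivWithin N g (Set.Icc a b) ξ
        = iteratedDerivWithin N f (Set.Icc a b) ξ
          - iteratedDerivWithin N (fun t => Q.eval t) (Set.Icc a b) ξ :=
      iteratedDerivWithin_sub hξ hu (hf ξ hξ) ((my_poly_contDiff Q N).contDiffOn ξ hξ)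
    have hQval : iteratedDerivWithin N (fun t => Q.eval t) (Set.Icc a b) ξ
        = lam * N.factorial := by
      rw [my_poly_iteratedDerivWithin a b hab N Q ξ hξ, hQdef,
        my_poly_iterate_deriv N hN x P hPdeg lam, Polynomial.eval_C]
    have hfval : iteratedDerivWithin N f (Set.Icc a b) ξ = lam * N.factorial := by
      rw [hsplit, hQval] at hξ0
      linarith
    have hfacpos : (0 : ℝ) < (N.factorial : ℝ) := by positivity
    have hkey : f ζ - P.eval ζ
        = iteratedDerivWithin N f (Set.Icc a b) ξ / N.factorial
          * ∏ i ∈ Finset.Icc 1 N, (ζ - x i) := by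
      rw [hfval, ← hWeval, hlamdef]
      field_simp
    rw [hkey, abs_mul, abs_div, abs_of_pos hfacpos]
    have hb1 : |iteratedDerivWithin N f (Set.Icc a b) ξ| / (N.factorial : ℝ)
        ≤ M / N.factorial := by gcongr; exact hM ξ hξ
    have hb2 := my_node_prod_bound a b hab N hN x hx ζ hζ
    calc |iteratedDerivWithin N f (Set.Icc a b) ξ| / (N.factorial : ℝ)
          * |∏ i ∈ Finset.Icc 1 N, (ζ - x i)|
        ≤ (M / N.factorial) * ((b - a) ^ N / 2 ^ (2 * N - 1)) :=
          mul_le_mul hb1 hb2 (abs_nonneg _) (div_nonneg hM0 hfacpos.le)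
      _ = (b - a) ^ N / (N.factorial * 2 ^ (2 * N - 1)) * M := by
          field_simp
end

section
/- Let N ≥ 1 be an integer and let f : [0,1] → ℝ be N times continuously differentiable with sup_{ξ∈[0,1]} |f^{(N)}(ξ)| ≤ M̃ for some real number M̃. Then there exists a polynomial p of degree at most N−1 such that (∫_0^1 (f(ζ) − p(ζ))² dζ)^{1/2} ≤ M̃ / (N! · 2^{2N−1}). -/
open Polynomial Set

private lemma polyContDiff (p : ℝ[X]) {n : ℕ} : ContDiff ℝ n fun x : ℝ => p.eval x := by
  induction p using Polynomial.induction_on' with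
  | add p q hp hq => simpa using hp.add hq
  | monomial m a =>
    simpa [Polynomial.eval_monomial] using (contDiff_const (c := a)).mul (contDiff_id.pow m)

private lemma polyIterDerivWithin (n : ℕ) (p : ℝ[X]) {x : ℝ} (hx : x ∈ Icc (0:ℝ) 1) :
    iteratedDerivWithin n (fun y => p.eval y) (Icc 0 1) x
      = (Polynomial.derivative^[n] p).eval x := by
  have udo : UniqueDiffOn ℝ (Icc (0:ℝ) 1) := uniqueDiffOn_Icc one_pos
  induction n generalizing p with
  | zero => simp
  | succ n ih =>
    rw [iteratedDerivWithin_succ']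
    have heq : Set.EqOn (derivWithin (fun y => p.eval y) (Icc (0:ℝ) 1))
        (fun y => (Polynomial.derivative p).eval y) (Icc (0:ℝ) 1) := by
      intro y hy
      have hd : DifferentiableAt ℝ (fun y : ℝ => p.eval y) y := p.differentiableAt
      rw [hd.derivWithin (udo y hy)]
      simp [Polynomial.deriv]
    rw [iteratedDerivWithin_congr heq hx, ih (Polynomial.derivative p),
      Function.iterate_succ_apply]

private lemma genRolle : ∀ (n : ℕ) (h : ℝ → ℝ), ContDiffOn ℝ n h (Icc 0 1) →
    ∀ z : Fin (n+1) → ℝ, StrictMono z → (∀ i, z i ∈ Icc (0:ℝ) 1) → (∀ i, h (z i) = 0) →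
    ∃ ξ ∈ Icc (0:ℝ) 1, iteratedDerivWithin n h (Icc 0 1) ξ = 0 := by
  intro n
  induction n with
  | zero =>
    intro h _ z _ hz01 hz0
    exact ⟨z 0, hz01 0, by simpa using hz0 0⟩
  | succ n IH =>
    intro h hh z hzm hz01 hz0
    have udo : UniqueDiffOn ℝ (Icc (0:ℝ) 1) := uniqueDiffOn_Icc one_pos
    have key : ∀ i : Fin (n+1), ∃ y, y ∈ Ioo (z i.castSucc) (z i.succ) ∧
        derivWithin h (Icc 0 1) y = 0 := by
      intro i
      have hab : z i.castSucc < z i.succ := hzm (Fin.castSucc_lt_succ (i := i))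
      have hIoo : Ioo (z i.castSucc) (z i.succ) ⊆ Ioo (0:ℝ) 1 := fun y hy =>
        ⟨lt_of_le_of_lt (hz01 i.castSucc).1 hy.1, lt_of_lt_of_le hy.2 (hz01 i.succ).2⟩
      have hasD : ∀ y ∈ Ioo (z i.castSucc) (z i.succ),
          HasDerivAt h (derivWithin h (Icc 0 1) y) y := by
        intro y hy
        have hmem : Icc (0:ℝ) 1 ∈ nhds y := Icc_mem_nhds (hIoo hy).1 (hIoo hy).2
        have hdw : DifferentiableWithinAt ℝ h (Icc 0 1) y :=
          (hh.differentiableOn (by simp)) y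
            (Ioo_subset_Icc_self (hIoo hy))
        have hda : DifferentiableAt ℝ h y := hdw.differentiableAt hmem
        rw [derivWithin_of_mem_nhds hmem]
        exact hda.hasDerivAt
      have hcont : ContinuousOn h (Icc (z i.castSucc) (z i.succ)) :=
        hh.continuousOn.mono (Icc_subset_Icc (hz01 i.castSucc).1 (hz01 i.succ).2)
      obtain ⟨c, hc, hc0⟩ := exists_hasDerivAt_eq_zero hab hcont
        ((hz0 i.castSucc).trans (hz0 i.succ).symm) hasD
      exact ⟨c, hc, hc0⟩
    choose c hc hc0 using key
    have hcm : StrictMono c := by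
      intro i j hij
      have h3 : z i.succ ≤ z j.castSucc := by
        apply hzm.monotone
        simp only [Fin.le_def, Fin.val_succ, Fin.coe_castSucc]
        exact hij
      exact lt_of_lt_of_le (hc i).2 (le_trans h3 (le_of_lt (hc j).1))
    have hc01 : ∀ i, c i ∈ Icc (0:ℝ) 1 := fun i =>
      ⟨le_of_lt (lt_of_le_of_lt (hz01 i.castSucc).1 (hc i).1),
       le_of_lt (lt_of_lt_of_le (hc i).2 (hz01 i.succ).2)⟩
    have hh' : ContDiffOn ℝ n (derivWithin h (Icc 0 1)) (Icc 0 1) :=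
      hh.derivWithin udo (by exact_mod_cast le_refl (n+1))
    obtain ⟨ξ, hξ, hξ0⟩ := IH _ hh' c hcm hc01 hc0
    exact ⟨ξ, hξ, by rw [iteratedDerivWithin_succ']; exact hξ0⟩

private lemma chebAux : ∀ n : ℕ, ((Polynomial.Chebyshev.T ℝ n).natDegree ≤ n ∧
      (Polynomial.Chebyshev.T ℝ n).coeff n = 2 ^ (n-1)) ∧
    ((Polynomial.Chebyshev.T ℝ (n+1)).natDegree ≤ n+1 ∧
      (Polynomial.Chebyshev.T ℝ (n+1)).coeff (n+1) = 2 ^ n) := by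
  intro n
  induction n with
  | zero =>
    refine ⟨⟨?_, ?_⟩, ⟨?_, ?_⟩⟩
    · simp [Polynomial.Chebyshev.T_zero]
    · simp [Polynomial.Chebyshev.T_zero]
    · norm_num [Polynomial.Chebyshev.T_one]
    · norm_num [Polynomial.Chebyshev.T_one]
  | succ n ih =>
    refine ⟨ih.2, ?_, ?_⟩
    · have hrec : Polynomial.Chebyshev.T ℝ ((n:ℤ)+2)
          = 2 * X * Polynomial.Chebyshev.T ℝ ((n:ℤ)+1) - Polynomial.Chebyshev.T ℝ n :=
        Polynomial.Chebyshev.T_add_two ℝ n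
      have hcast : ((n+1:ℕ):ℤ) + 1 = (n:ℤ)+2 := by push_cast; ring
      rw [hcast, hrec]
      have h2X : ((2:ℝ[X]) * X).natDegree ≤ 1 := by
        apply le_trans Polynomial.natDegree_mul_le
        simp
      have h1 : ((2:ℝ[X]) * X * Polynomial.Chebyshev.T ℝ ((n:ℤ)+1)).natDegree ≤ n + 2 := by
        apply le_trans Polynomial.natDegree_mul_le
        have := ih.2.1
        push_cast at this ⊢
        omega
      apply le_trans (Polynomial.natDegree_sub_le _ _)
      have := ih.1.1
      omega
    · have hrec : Polynomial.Chebyshev.T ℝ ((n:ℤ)+2)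
          = 2 * X * Polynomial.Chebyshev.T ℝ ((n:ℤ)+1) - Polynomial.Chebyshev.T ℝ n :=
        Polynomial.Chebyshev.T_add_two ℝ n
      have hcast : ((n+1:ℕ):ℤ) + 1 = (n:ℤ)+2 := by push_cast; ring
      rw [hcast, hrec]
      have h2 : (2:ℝ[X]) * X * Polynomial.Chebyshev.T ℝ ((n:ℤ)+1)
          = Polynomial.C 2 * (X * Polynomial.Chebyshev.T ℝ ((n:ℤ)+1)) := by
        rw [map_ofNat Polynomial.C 2]
        ring
      rw [Polynomial.coeff_sub, h2, Polynomial.coeff_C_mul, Polynomial.coeff_X_mul]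
      have hz : (Polynomial.Chebyshev.T ℝ (n:ℤ)).coeff (n+1+1) = 0 :=
        Polynomial.coeff_eq_zero_of_natDegree_lt (lt_of_le_of_lt ih.1.1 (by omega))
      rw [hz, ih.2.2]
      ring

private lemma chebDeg (N : ℕ) (hN : 1 ≤ N) :
    (Polynomial.Chebyshev.T ℝ N).natDegree = N ∧
    (Polynomial.Chebyshev.T ℝ N).leadingCoeff = 2^(N-1) := by
  have h1 := (chebAux N).1.1
  have h2 := (chebAux N).1.2
  have hne : (Polynomial.Chebyshev.T ℝ N).coeff N ≠ 0 := by
    rw [h2]; positivity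
  have hdeg : (Polynomial.Chebyshev.T ℝ N).natDegree = N :=
    le_antisymm h1 (Polynomial.le_natDegree_of_ne_zero hne)
  exact ⟨hdeg, by rw [Polynomial.leadingCoeff, hdeg, h2]⟩

private lemma chebBound (N : ℕ) (y : ℝ) (hy : y ∈ Icc (-1:ℝ) 1) :
    |(Polynomial.Chebyshev.T ℝ N).eval y| ≤ 1 := by
  have : y = Real.cos (Real.arccos y) := (Real.cos_arccos hy.1 hy.2).symm
  rw [this, Polynomial.Chebyshev.T_real_cos]
  exact Real.abs_cos_le_one _

private noncomputable def thN (N : ℕ) (i : Fin N) : ℝ := (2*(i:ℕ)+1)*Real.pi/(2*N)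
private noncomputable def tN (N : ℕ) (i : Fin N) : ℝ := (1 + Real.cos (thN N i))/2

private lemma thN_mem (N : ℕ) (i : Fin N) : thN N i ∈ Icc (0:ℝ) Real.pi := by
  have hNpos : (0:ℝ) < N := by exact_mod_cast i.pos
  have hpi := Real.pi_pos
  unfold thN
  constructor
  · positivity
  · rw [div_le_iff₀ (by positivity)]
    have h2 : (2*(i:ℕ)+1 : ℝ) ≤ 2*N := by
      have h := i.isLt
      exact_mod_cast Nat.le_of_lt_succ (by omega)
    nlinarith

private lemma tN_strictAnti (N : ℕ) : StrictAnti (tN N) := by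
  intro i j hij
  have hth : thN N i < thN N j := by
    unfold thN
    have hNpos : (0:ℝ) < N := by exact_mod_cast i.pos
    have hpi := Real.pi_pos
    have hij' : ((i:ℕ):ℝ) < ((j:ℕ):ℝ) := by exact_mod_cast hij
    apply div_lt_div_of_pos_right ?_ (by positivity)
    nlinarith
  have hcos : Real.cos (thN N j) < Real.cos (thN N i) :=
    Real.strictAntiOn_cos (thN_mem N i) (thN_mem N j) hth
  unfold tN
  linarith

private lemma tN_mem (N : ℕ) (i : Fin N) : tN N i ∈ Icc (0:ℝ) 1 := by
  have h1 := Real.neg_one_le_cos (thN N i)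
  have h2 := Real.cos_le_one (thN N i)
  unfold tN; constructor <;> [linarith; linarith]

private lemma tN_cheb (N : ℕ) (hN : 1 ≤ N) (i : Fin N) :
    (Polynomial.Chebyshev.T ℝ N).eval (2 * tN N i - 1) = 0 := by
  have h : 2 * tN N i - 1 = Real.cos (thN N i) := by unfold tN; ring
  rw [h, Polynomial.Chebyshev.T_real_cos]
  rw [Real.cos_eq_zero_iff]
  refine ⟨i, ?_⟩
  unfold thN
  have hN0 : (N:ℝ) ≠ 0 := by positivity
  field_simp
  push_cast
  ring

private noncomputable def omN (N : ℕ) : Polynomial ℝ :=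
  ∏ i : Fin N, (Polynomial.X - Polynomial.C (tN N i))

private lemma omN_monic (N : ℕ) : (omN N).Monic :=
  Polynomial.monic_prod_of_monic _ _ (fun i _ => Polynomial.monic_X_sub_C _)

private lemma omN_natDegree (N : ℕ) : (omN N).natDegree = N := by
  unfold omN
  rw [Polynomial.natDegree_prod_of_monic _ _ (fun i _ => Polynomial.monic_X_sub_C _)]
  simp

private lemma omN_eval_bound (N : ℕ) (hN : 1 ≤ N) (x : ℝ) (hx : x ∈ Icc (0:ℝ) 1) :
    |(omN N).eval x| ≤ 1 / 2^(2*N-1) := by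
  set L : Polynomial ℝ := Polynomial.C (2:ℝ) * Polynomial.X + Polynomial.C (-1:ℝ) with hL
  set T := Polynomial.Chebyshev.T ℝ N with hT
  set Q := T.comp L with hQ
  set c : ℝ := 2^(2*N-1) with hc
  have hc0 : c ≠ 0 := by positivity
  have hLdeg : L.natDegree = 1 := Polynomial.natDegree_linear two_ne_zero
  have hLlc : L.leadingCoeff = 2 := Polynomial.leadingCoeff_linear two_ne_zero
  have hTdeg := (chebDeg N hN).1
  have hTlc := (chebDeg N hN).2
  have hQdeg : Q.natDegree = N := by
    rw [hQ, Polynomial.natDegree_comp, hTdeg, hLdeg, mul_one]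
  have hQlc : Q.leadingCoeff = c := by
    rw [hQ, Polynomial.leadingCoeff_comp (by rw [hLdeg]; omega), hTlc, hLlc, hTdeg,
      ← pow_add]
    congr 1
    omega
  have hQ0 : Q ≠ 0 := by
    rw [← Polynomial.leadingCoeff_ne_zero, hQlc]; exact hc0
  have hω0 : omN N ≠ 0 := (omN_monic N).ne_zero
  have hCc0 : Polynomial.C c * omN N ≠ 0 :=
    mul_ne_zero (by simpa using hc0) hω0
  have hdegeq : Q.degree = (Polynomial.C c * omN N).degree := by
    rw [Polynomial.degree_eq_natDegree hQ0, Polynomial.degree_eq_natDegree hCc0,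
      hQdeg, Polynomial.natDegree_C_mul hc0, omN_natDegree]
  have hlceq : Q.leadingCoeff = (Polynomial.C c * omN N).leadingCoeff := by
    rw [hQlc, Polynomial.leadingCoeff_mul, Polynomial.leadingCoeff_C,
      (omN_monic N).leadingCoeff, mul_one]
  have hroots : ∀ i : Fin N, (Q - Polynomial.C c * omN N).eval (tN N i) = 0 := by
    intro i
    have h1 : Q.eval (tN N i) = 0 := by
      rw [hQ, Polynomial.eval_comp]
      have : L.eval (tN N i) = 2 * tN N i - 1 := by simp [hL]; ring
      rw [this]
      exact tN_cheb N hN i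
    have h2 : (omN N).eval (tN N i) = 0 := by
      unfold omN
      rw [Polynomial.eval_prod]
      exact Finset.prod_eq_zero (Finset.mem_univ i) (by simp)
    simp [h1, h2]
  have hA : Q - Polynomial.C c * omN N = 0 := by
    by_contra hA0
    have hdlt : (Q - Polynomial.C c * omN N).degree < Q.degree :=
      Polynomial.degree_sub_lt hdegeq hQ0 hlceq
    have hnlt : (Q - Polynomial.C c * omN N).natDegree < N := by
      rw [Polynomial.natDegree_lt_iff_degree_lt hA0]
      rw [Polynomial.degree_eq_natDegree hQ0, hQdeg] at hdlt
      exact_mod_cast hdlt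
    have hsub : Finset.image (tN N) Finset.univ ⊆
        (Q - Polynomial.C c * omN N).roots.toFinset := by
      intro y hy
      obtain ⟨i, _, rfl⟩ := Finset.mem_image.mp hy
      rw [Multiset.mem_toFinset, Polynomial.mem_roots hA0]
      exact hroots i
    have hcard : N ≤ (Q - Polynomial.C c * omN N).roots.toFinset.card := by
      have := Finset.card_le_card hsub
      rwa [Finset.card_image_of_injective _ (tN_strictAnti N).injective,
        Finset.card_univ, Fintype.card_fin] at this
    have := (Q - Polynomial.C c * omN N).roots.toFinset_card_le
    have := (Q - Polynomial.C c * omN N).card_roots'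
    omega
  have hQeq : Q = Polynomial.C c * omN N := by
    have := sub_eq_zero.mp hA
    exact this
  have heval : Polynomial.eval (2*x-1) T = c * (omN N).eval x := by
    have : Q.eval x = c * (omN N).eval x := by
      rw [hQeq]; simp
    rw [← this, hQ, Polynomial.eval_comp]
    congr 1
    simp [hL]; ring
  have hTb : |Polynomial.eval (2*x-1) T| ≤ 1 := by
    apply chebBound
    constructor <;> [linarith [hx.1]; linarith [hx.2]]
  rw [heval, abs_mul, abs_of_pos (by positivity : (0:ℝ) < c)] at hTb
  rw [le_div_iff₀ (by positivity : (0:ℝ) < (2:ℝ)^(2*N-1))]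
  calc |(omN N).eval x| * 2^(2*N-1) = c * |(omN N).eval x| := by rw [hc]; ring
    _ ≤ 1 := hTb

/-- Best `L²[0,1]` polynomial approximation bound: if `f` is `N` times continuously
differentiable on `[0,1]` with `sup_{ξ∈[0,1]} |f^{(N)} ξ| ≤ M̃`, then there is a
polynomial `p` of degree at most `N-1` with
`(∫_0^1 (f - p)²)^{1/2} ≤ M̃ / (N! · 2^(2N-1))`. -/
theorem best_L2_polynomial_approx
    (N : ℕ) (hN : 1 ≤ N) (f : ℝ → ℝ) (Mt : ℝ)
    (hf : ContDiffOn ℝ N f (Set.Icc 0 1))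
    (hbound : ∀ ξ ∈ Set.Icc (0:ℝ) 1, |iteratedDerivWithin N f (Set.Icc 0 1) ξ| ≤ Mt) :
    ∃ p : Polynomial ℝ, p.natDegree ≤ N - 1 ∧
      Real.sqrt (∫ ζ in (0:ℝ)..1, (f ζ - p.eval ζ) ^ 2)
        ≤ Mt / (N.factorial * 2 ^ (2 * N - 1)) := by
  have udo : UniqueDiffOn ℝ (Icc (0:ℝ) 1) := uniqueDiffOn_Icc one_pos
  have hMt : 0 ≤ Mt :=
    le_trans (abs_nonneg _) (hbound 0 ⟨le_refl 0, zero_le_one⟩)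
  set t := tN N with ht
  have tinj : Set.InjOn t (Finset.univ : Finset (Fin N)) :=
    fun a _ b _ h => (tN_strictAnti N).injective h
  set p := Lagrange.interpolate Finset.univ t (fun i => f (t i)) with hp
  have hpdeg : p.natDegree ≤ N - 1 := by
    by_cases hp0 : p = 0
    · simp [hp0]
    · have hdeg := Lagrange.degree_interpolate_lt (r := fun i => f (t i)) tinj
      have h2 : p.natDegree < N := by
        rw [Polynomial.natDegree_lt_iff_degree_lt hp0]
        rw [Finset.card_univ, Fintype.card_fin] at hdeg; exact hdeg
      omega
  set B := Mt / (N.factorial * 2^(2*N-1)) with hB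
  have hB0 : (0:ℝ) ≤ B := div_nonneg hMt (by positivity)
  have hNfac : (0:ℝ) < (N.factorial : ℝ) := by exact_mod_cast N.factorial_pos
  have hsup : ∀ x ∈ Icc (0:ℝ) 1, |f x - p.eval x| ≤ B := by
    intro x hx
    by_cases hnode : ∃ i : Fin N, t i = x
    · obtain ⟨i, rfl⟩ := hnode
      have hev : p.eval (t i) = f (t i) :=
        Lagrange.eval_interpolate_at_node (fun i => f (t i)) tinj (Finset.mem_univ i)
      simp [hev, hB0]
    · push_neg at hnode
      have hωx : (omN N).eval x ≠ 0 := by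
        unfold omN
        rw [Polynomial.eval_prod]
        apply Finset.prod_ne_zero_iff.mpr
        intro i _
        simp only [Polynomial.eval_sub, Polynomial.eval_X, Polynomial.eval_C]
        exact sub_ne_zero.mpr (fun h => hnode i h.symm)
      set c := (f x - p.eval x) / (omN N).eval x with hcdef
      have hcmul : c * (omN N).eval x = f x - p.eval x := div_mul_cancel₀ _ hωx
      set q := p + Polynomial.C c * omN N with hq
      set g := fun y => f y - q.eval y with hg
      set Z := insert x (Finset.image t Finset.univ) with hZ
      have hxZ : x ∉ Finset.image t Finset.univ := by
        simp only [Finset.mem_image]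
        rintro ⟨i, _, h⟩
        exact hnode i h
      have hZcard : Z.card = N + 1 := by
        rw [hZ, Finset.card_insert_of_notMem hxZ,
          Finset.card_image_of_injective _ (tN_strictAnti N).injective,
          Finset.card_univ, Fintype.card_fin]
      set z := fun i : Fin (N+1) => ((Z.orderIsoOfFin hZcard i : Z) : ℝ) with hz
      have hzm : StrictMono z := by
        intro a b hab
        exact_mod_cast (Z.orderIsoOfFin hZcard).strictMono hab
      have hzZ : ∀ i, z i ∈ Z := fun i => (Z.orderIsoOfFin hZcard i).2
      have hZ01 : ∀ y ∈ Z, y ∈ Icc (0:ℝ) 1 := by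
        intro y hy
        rw [hZ, Finset.mem_insert] at hy
        rcases hy with rfl | hy
        · exact hx
        · obtain ⟨i, _, rfl⟩ := Finset.mem_image.mp hy
          exact tN_mem N i
      have homt : ∀ i : Fin N, (omN N).eval (t i) = 0 := by
        intro i
        unfold omN
        rw [Polynomial.eval_prod]
        exact Finset.prod_eq_zero (Finset.mem_univ i) (by simp [ht])
      have hgz : ∀ y ∈ Z, g y = 0 := by
        intro y hy
        rw [hZ, Finset.mem_insert] at hy
        rcases hy with rfl | hy
        · simp only [hg, hq, Polynomial.eval_add, Polynomial.eval_mul, Polynomial.eval_C]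
          rw [hcmul]
          ring
        · obtain ⟨i, _, rfl⟩ := Finset.mem_image.mp hy
          have h1 : p.eval (t i) = f (t i) :=
            Lagrange.eval_interpolate_at_node (fun i => f (t i)) tinj (Finset.mem_univ i)
          simp [hg, hq, h1, homt i]
      have hgC : ContDiffOn ℝ N g (Icc 0 1) :=
        hf.sub ((polyContDiff q).contDiffOn)
      obtain ⟨ξ, hξ, hξ0⟩ := genRolle N g hgC z hzm
        (fun i => hZ01 _ (hzZ i)) (fun i => hgz _ (hzZ i))
      have hdp : Polynomial.derivative^[N] p = 0 :=
        Polynomial.iterate_derivative_eq_zero (by omega : p.natDegree < N)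
      have hdω : Polynomial.derivative^[N] (omN N) = Polynomial.C (N.factorial : ℝ) := by
        ext m
        rw [Polynomial.coeff_iterate_derivative]
        rcases Nat.eq_zero_or_pos m with rfl | hm
        · have hcoefN : (omN N).coeff N = 1 := by
            have := (omN_monic N).coeff_natDegree
            rwa [omN_natDegree] at this
          simp [hcoefN, Nat.descFactorial_self, Polynomial.coeff_C]
        · have hcz : (omN N).coeff (m + N) = 0 :=
            Polynomial.coeff_eq_zero_of_natDegree_lt (by rw [omN_natDegree]; omega)
          rw [hcz]
          simp [Polynomial.coeff_C, hm.ne']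
      have hdq : Polynomial.derivative^[N] q = Polynomial.C (c * N.factorial) := by
        have hadd : Polynomial.derivative^[N] (p + Polynomial.C c * omN N)
            = Polynomial.derivative^[N] p
              + Polynomial.derivative^[N] (Polynomial.C c * omN N) := by
          simp_rw [← Module.End.pow_apply, map_add]
        rw [hq, hadd, hdp, Polynomial.iterate_derivative_C_mul, hdω]
        simp [← Polynomial.C_mul]
      have hsplit : iteratedDerivWithin N g (Icc 0 1) ξ
          = iteratedDerivWithin N f (Icc 0 1) ξ - c * N.factorial := by
        have hgg : g = f - fun y => q.eval y := rfl
        rw [hgg, iteratedDerivWithin_sub hξ udo (hf ξ hξ) ((polyContDiff q).contDiffOn ξ hξ),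
          polyIterDerivWithin N q hξ, hdq]
        simp
      have hceq : c * N.factorial = iteratedDerivWithin N f (Icc 0 1) ξ := by
        rw [hsplit] at hξ0
        linarith
      have hcabs : |c| ≤ Mt / N.factorial := by
        rw [le_div_iff₀ hNfac]
        calc |c| * N.factorial = |c * N.factorial| := by
              rw [abs_mul, abs_of_pos hNfac]
          _ ≤ Mt := by rw [hceq]; exact hbound ξ hξ
      have : f x - p.eval x = c * (omN N).eval x := hcmul.symm
      rw [this, abs_mul]
      calc |c| * |(omN N).eval x| ≤ (Mt / N.factorial) * (1 / 2^(2*N-1)) :=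
            mul_le_mul hcabs (omN_eval_bound N hN x hx) (abs_nonneg _)
              (div_nonneg hMt hNfac.le)
        _ = B := by rw [hB, div_mul_div_comm, mul_one]
  refine ⟨p, hpdeg, ?_⟩
  have hcont : ContinuousOn (fun ζ => (f ζ - p.eval ζ)^2) (Icc (0:ℝ) 1) :=
    (hf.continuousOn.sub ((polyContDiff p (n := 0)).continuous.continuousOn)).pow 2
  have hint : ∫ ζ in (0:ℝ)..1, (f ζ - p.eval ζ)^2 ≤ B^2 := by
    have h1 : ∫ ζ in (0:ℝ)..1, (f ζ - p.eval ζ)^2 ≤ ∫ _ in (0:ℝ)..1, B^2 := by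
      apply intervalIntegral.integral_mono_on zero_le_one ?_ intervalIntegrable_const ?_
      · exact (hcont.mono (by rw [uIcc_of_le zero_le_one])).intervalIntegrable
      · intro ζ hζ
        have := abs_le.mp (hsup ζ hζ)
        exact sq_le_sq' (by linarith [this.1]) this.2
    simpa using h1
  calc Real.sqrt (∫ ζ in (0:ℝ)..1, (f ζ - p.eval ζ)^2)
      ≤ Real.sqrt (B^2) := Real.sqrt_le_sqrt hint
    _ = B := Real.sqrt_sq hB0
end

section
/- Let M ≥ 1 be an integer and let f : [0,1] → ℝ be M times continuously differentiable with sup_{ξ∈[0,1]} |f^{(M)}(ξ)| ≤ M̃ for some real number M̃. Then there exist real coefficients c_0, …, c_{M−1} such that (∫_0^1 (f(ζ) − Σ_{m=0}^{M−1} c_m B_m(ζ))² dζ)^{1/2} ≤ M̃ / (M! · 2^{2M−1}). -/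
open Polynomial Polynomial.Chebyshev Real

private lemma poly_contDiff (p : Polynomial ℝ) {n : ℕ∞} : ContDiff ℝ n fun x : ℝ => p.eval x := by
  induction p using Polynomial.induction_on' with
  | add p q hp hq => simpa [Polynomial.eval_add] using hp.add hq
  | monomial k c =>
      simpa [Polynomial.eval_monomial] using contDiff_const.mul (contDiff_id.pow k)

private lemma iteratedDerivWithin_polynomial (n : ℕ) :
    ∀ (p : Polynomial ℝ) {s : Set ℝ} (hs : UniqueDiffOn ℝ s), ∀ x ∈ s,
      iteratedDerivWithin n (fun t => p.eval t) s x
        = (Polynomial.derivative^[n] p).eval x := by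
  induction n with
  | zero => intro p s hs x hx; simp
  | succ n ih =>
    intro p s hs x hx
    rw [iteratedDerivWithin_succ']
    have heq : Set.EqOn (derivWithin (fun t => p.eval t) s)
        (fun t => (Polynomial.derivative p).eval t) s := by
      intro y hy
      have hD : DifferentiableAt ℝ (fun t => p.eval t) y := p.differentiableAt
      rw [DifferentiableAt.derivWithin hD (hs.uniqueDiffWithinAt hy)]
      exact Polynomial.deriv (p := p)
    rw [iteratedDerivWithin_congr heq hx, ih _ hs x hx, ← Function.iterate_succ_apply]

private lemma iterated_rolle : ∀ (n : ℕ) (g : ℝ → ℝ), ContDiffOn ℝ n g (Set.Icc 0 1) →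
    ∀ x : Fin (n+1) → ℝ, StrictMono x → (∀ i, x i ∈ Set.Icc (0:ℝ) 1) → (∀ i, g (x i) = 0) →
    ∃ ξ ∈ Set.Icc (0:ℝ) 1, iteratedDerivWithin n g (Set.Icc 0 1) ξ = 0 := by
  intro n
  induction n with
  | zero =>
    intro g _ x _ hmem hz
    exact ⟨x 0, hmem 0, by simpa using hz 0⟩
  | succ n ih =>
    intro g hg x hx hmem hz
    have huniq : UniqueDiffOn ℝ (Set.Icc (0:ℝ) 1) := uniqueDiffOn_Icc one_pos
    have hstep : ∀ i : Fin (n+1), ∃ y ∈ Set.Ioo (x i.castSucc) (x i.succ),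
        derivWithin g (Set.Icc 0 1) y = 0 := by
      intro i
      have hlt : x i.castSucc < x i.succ := hx Fin.castSucc_lt_succ
      have hsub : Set.Icc (x i.castSucc) (x i.succ) ⊆ Set.Icc (0:ℝ) 1 :=
        Set.Icc_subset_Icc (hmem i.castSucc).1 (hmem i.succ).2
      have hder : ∀ t ∈ Set.Ioo (x i.castSucc) (x i.succ),
          HasDerivAt g (derivWithin g (Set.Icc 0 1) t) t := by
        intro t ht
        have ht0 : (0:ℝ) < t := lt_of_le_of_lt (hmem i.castSucc).1 ht.1
        have ht1 : t < 1 := lt_of_lt_of_le ht.2 (hmem i.succ).2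
        have hnhds : Set.Icc (0:ℝ) 1 ∈ nhds t := Icc_mem_nhds ht0 ht1
        have hdiff : DifferentiableWithinAt ℝ g (Set.Icc 0 1) t :=
          (hg.differentiableOn (by simp)) t
            (hsub (Set.Ioo_subset_Icc_self ht))
        exact hdiff.hasDerivWithinAt.hasDerivAt hnhds
      exact exists_hasDerivAt_eq_zero hlt ((hg.continuousOn).mono hsub)
        ((hz i.castSucc).trans (hz i.succ).symm) hder
    choose y hy hy0 using hstep
    have hymono : StrictMono y := by
      intro i j hij
      have h1 : y i < x i.succ := (hy i).2
      have h2 : x j.castSucc < y j := (hy j).1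
      have h3 : x i.succ ≤ x j.castSucc := by
        apply hx.monotone
        rw [Fin.le_def]
        simp only [Fin.val_succ, Fin.coe_castSucc]
        omega
      linarith
    have hymem : ∀ i, y i ∈ Set.Icc (0:ℝ) 1 := by
      intro i
      constructor
      · exact le_trans (hmem i.castSucc).1 (le_of_lt (hy i).1)
      · exact le_trans (le_of_lt (hy i).2) (hmem i.succ).2
    have hg' : ContDiffOn ℝ n (derivWithin g (Set.Icc 0 1)) (Set.Icc 0 1) := by
      apply hg.derivWithin huniq
      exact_mod_cast le_refl ((n:ℕ∞) + 1)
    obtain ⟨ξ, hξ, hξ0⟩ := ih (derivWithin g (Set.Icc 0 1)) hg' y hymono hymem hy0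
    refine ⟨ξ, hξ, ?_⟩
    rw [iteratedDerivWithin_succ']
    exact hξ0

private lemma T_deg_coeff : ∀ n : ℕ,
    ((T ℝ n).natDegree ≤ n ∧ (T ℝ n).coeff n = 2^(n-1)) ∧
    ((T ℝ (n+1)).natDegree ≤ n+1 ∧ (T ℝ (n+1)).coeff (n+1) = 2^n) := by
  intro n
  induction n with
  | zero =>
    constructor
    · simpa using by norm_num [T_zero]
    · constructor
      · simp [T_one]
      · simp [T_one]
  | succ n ih =>
    obtain ⟨⟨hd0, hc0⟩, hd1, hc1⟩ := ih
    refine ⟨⟨hd1, hc1⟩, ?_, ?_⟩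
    · have h : T ℝ ((n:ℤ) + 1 + 1) = 2 * X * T ℝ ((n:ℤ) + 1) - T ℝ n := by
        have := T_add_two ℝ (n : ℤ)
        convert this using 2 <;> push_cast <;> ring
      have h2 : ((n:ℤ) + 1 + 1) = ((n + 2 : ℕ) : ℤ) := by push_cast; ring
      rw [h2] at h
      rw [show ((n+1:ℕ):ℤ) + 1 = ((n+2:ℕ):ℤ) by push_cast; ring, h]
      apply le_trans (natDegree_sub_le _ _)
      apply max_le
      · apply le_trans (natDegree_mul_le)
        have : (2 * X : ℝ[X]).natDegree ≤ 1 := by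
          apply le_trans (natDegree_mul_le)
          simp
        omega
      · omega
    · have h : T ℝ ((n + 2 : ℕ) : ℤ) = 2 * X * T ℝ ((n:ℤ) + 1) - T ℝ n := by
        have := T_add_two ℝ (n : ℤ)
        rw [show ((n + 2 : ℕ) : ℤ) = (n:ℤ) + 2 by push_cast; ring]
        convert this using 2
      rw [show ((n+1:ℕ):ℤ) + 1 = ((n+2:ℕ):ℤ) by push_cast; ring, h]
      rw [coeff_sub]
      have hz : (T ℝ n).coeff (n+2) = 0 := coeff_eq_zero_of_natDegree_lt (by omega)
      have hX : (2 * X * T ℝ ((n:ℤ)+1)).coeff (n+2) = 2 * (T ℝ ((n:ℤ)+1)).coeff (n+1) := by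
        rw [mul_assoc, show ((2 : ℝ[X]) = Polynomial.C 2) from (map_ofNat Polynomial.C 2).symm, coeff_C_mul, coeff_X_mul]
      rw [hX, hz, hc1]
      rw [pow_succ]
      ring

private lemma T_deg_coeff' (n : ℕ) :
    (T ℝ n).natDegree ≤ n ∧ (T ℝ n).coeff n = 2^(n-1) :=
  (T_deg_coeff n).1

private lemma cheb_factor (M : ℕ) (hM : 1 ≤ M) :
    T ℝ M = C ((2:ℝ)^(M-1)) *
      Lagrange.nodal (Finset.range M) (fun i => Real.cos ((2*i+1)*Real.pi/(2*M))) := by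
  set r : ℕ → ℝ := fun i => Real.cos ((2*i+1)*Real.pi/(2*M)) with hr
  have hMR : (0:ℝ) < M := by exact_mod_cast hM
  have hθmem : ∀ i ∈ Finset.range M, (2*(i:ℝ)+1)*Real.pi/(2*M) ∈ Set.Icc 0 Real.pi := by
    intro i hi
    rw [Finset.mem_range] at hi
    constructor
    · positivity
    · rw [div_le_iff₀ (by positivity)]
      have : (2*(i:ℝ)+1) ≤ 2*M := by
        have : (i:ℝ) + 1 ≤ M := by exact_mod_cast hi
        linarith
      nlinarith [Real.pi_pos]
  have hinj : Set.InjOn r ↑(Finset.range M) := by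
    intro i hi j hj hij
    simp only [Finset.coe_range, Set.mem_Iio] at hi hj
    have h1 := Real.injOn_cos (hθmem i (Finset.mem_range.2 hi)) (hθmem j (Finset.mem_range.2 hj)) hij
    have hπ := Real.pi_ne_zero
    field_simp at h1
    have h1' : (i:ℝ) = j := by linarith
    exact_mod_cast h1'
  set W : ℝ[X] := Lagrange.nodal (Finset.range M) r with hW
  have hWdeg : W.natDegree = M := by simp [hW, Lagrange.natDegree_nodal]
  have hWmonic : W.Monic := Lagrange.nodal_monic
  have hD : T ℝ M - C ((2:ℝ)^(M-1)) * W = 0 := by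
    apply Polynomial.eq_zero_of_degree_lt_of_eval_index_eq_zero (Finset.range M) hinj
    · rw [Finset.card_range]
      rw [Polynomial.degree_lt_iff_coeff_zero]
      intro k hk
      rw [coeff_sub, coeff_C_mul]
      rcases eq_or_lt_of_le hk with rfl | hlt
      · rw [(T_deg_coeff' M).2]
        have : W.coeff M = 1 := by
          have := hWmonic
          rw [Polynomial.Monic, Polynomial.leadingCoeff, hWdeg] at this
          exact this
        rw [this, mul_one, sub_self]
      · rw [coeff_eq_zero_of_natDegree_lt (lt_of_le_of_lt (T_deg_coeff' M).1 hlt),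
          coeff_eq_zero_of_natDegree_lt (by omega : W.natDegree < k), mul_zero, sub_self]
    · intro i hi
      rw [Finset.mem_range] at hi
      rw [eval_sub, eval_mul, eval_C]
      have h0 : W.eval (r i) = 0 := Lagrange.eval_nodal_at_node (Finset.mem_range.2 hi)
      rw [h0, mul_zero, sub_zero, hr]
      have : (T ℝ M).eval (Real.cos ((2*(i:ℝ)+1)*Real.pi/(2*M)))
          = Real.cos ((M:ℝ) * ((2*(i:ℝ)+1)*Real.pi/(2*M))) := by
        have := T_real_cos ((2*(i:ℝ)+1)*Real.pi/(2*M)) (M:ℤ)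
        simpa using this
      rw [this]
      have harg : (M:ℝ) * ((2*(i:ℝ)+1)*Real.pi/(2*M)) = (i:ℝ)*Real.pi + Real.pi/2 := by
        field_simp
      rw [harg, Real.cos_add, Real.cos_pi_div_two, Real.sin_pi_div_two]
      rw [Real.sin_nat_mul_pi]
      ring
  exact sub_eq_zero.mp hD

private lemma cheb_nodal_bound (M : ℕ) (hM : 1 ≤ M) (x : ℝ) (hx : x ∈ Set.Icc (0:ℝ) 1) :
    |(Lagrange.nodal (Finset.range M)
        (fun i => (1 + Real.cos ((2*i+1)*Real.pi/(2*M)))/2)).eval x| ≤ 2 / 4 ^ M := by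
  set r : ℕ → ℝ := fun i => Real.cos ((2*i+1)*Real.pi/(2*M)) with hr
  set y : ℝ := 2*x - 1 with hy
  have hy1 : -1 ≤ y := by simp only [hy]; linarith [hx.1]
  have hy2 : y ≤ 1 := by simp only [hy]; linarith [hx.2]
  have heval : (Lagrange.nodal (Finset.range M) (fun i => (1 + r i)/2)).eval x
      = (Lagrange.nodal (Finset.range M) r).eval y * (1/2)^M := by
    rw [Lagrange.eval_nodal, Lagrange.eval_nodal,
      show ((1:ℝ)/2)^M = ∏ _i ∈ Finset.range M, (1/2:ℝ) by
        rw [Finset.prod_const, Finset.card_range],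
      ← Finset.prod_mul_distrib]
    apply Finset.prod_congr rfl
    intro i _
    simp only [hy]
    ring
  have hTy : ((T ℝ M).eval y) = Real.cos ((M:ℝ) * Real.arccos y) := by
    have := T_real_cos (Real.arccos y) (M:ℤ)
    rw [Real.cos_arccos hy1 hy2] at this
    simpa using this
  have hT1 : |(T ℝ M).eval y| ≤ 1 := by rw [hTy]; exact Real.abs_cos_le_one _
  have hfac := cheb_factor M hM
  have hevalr : (Lagrange.nodal (Finset.range M) r).eval y = (T ℝ M).eval y / 2^(M-1) := by
    rw [hfac, eval_mul, eval_C]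
    field_simp
    rfl
  rw [heval, hevalr, abs_mul, abs_div]
  have h2 : |(2:ℝ)^(M-1)| = 2^(M-1) := abs_of_pos (by positivity)
  have h3 : |(1/2:ℝ)^M| = (1/2)^M := abs_of_pos (by positivity)
  rw [h2, h3]
  have hkey : (2:ℝ)^(M-1) * 2^M = 4^M / 2 := by
    rw [← pow_add]
    have hexp : M - 1 + M = 2*M - 1 := by omega
    rw [hexp]
    have : (4:ℝ)^M = 2^(2*M) := by rw [show (4:ℝ) = 2^2 by norm_num, ← pow_mul]
    rw [this, show 2*M = (2*M-1)+1 by omega, pow_succ,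
      show 2*M-1+1-1 = 2*M-1 by omega]
    ring
  have hpos : (0:ℝ) < 2^(M-1) := by positivity
  calc |(T ℝ M).eval y| / 2^(M-1) * (1/2)^M ≤ 1 / 2^(M-1) * (1/2)^M := by
        apply mul_le_mul_of_nonneg_right _ (by positivity)
        exact div_le_div_of_nonneg_right hT1 hpos.le
    _ = 2 / 4^M := by
        have h4 : (0:ℝ) < 4^M := by positivity
        field_simp
        have h5 : (1/2:ℝ)^M * 2^M = 1 := by rw [← mul_pow]; norm_num
        have h6 : (4:ℝ)^M = 2 * (2^(M-1)*2^M) := by rw [hkey]; ring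
        have h7 : (1/2:ℝ)^M * 4^M = 2^(M-1)*2 := by
          linear_combination (1/2:ℝ)^M * h6 + (2^(M-1)*2) * h5
        linarith [h7]

private lemma bern_coeff_self (m : ℕ) :
    ((Polynomial.bernoulli m).map (algebraMap ℚ ℝ)).coeff m = 1 := by
  rw [Polynomial.coeff_map]
  have : (Polynomial.bernoulli m).coeff m = 1 := by
    rw [Polynomial.bernoulli, Polynomial.finset_sum_coeff]
    rw [Finset.sum_eq_single 0]
    · simp
    · intro i hi hne
      rw [Finset.mem_range] at hi
      rw [Polynomial.coeff_monomial, if_neg (by omega)]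
    · simp
  rw [this]; simp

private lemma bern_coeff_gt (m k : ℕ) (h : m < k) :
    ((Polynomial.bernoulli m).map (algebraMap ℚ ℝ)).coeff k = 0 := by
  rw [Polynomial.coeff_map]
  have : (Polynomial.bernoulli m).coeff k = 0 := by
    rw [Polynomial.bernoulli, Polynomial.finset_sum_coeff]
    apply Finset.sum_eq_zero
    intro i hi
    rw [Finset.mem_range] at hi
    rw [Polynomial.coeff_monomial, if_neg (by omega)]
  rw [this]; simp

private lemma monic_family_span (B : ℕ → Polynomial ℝ)
    (h1 : ∀ m, (B m).coeff m = 1) (h2 : ∀ m k, m < k → (B m).coeff k = 0) :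
    ∀ (n : ℕ) (q : Polynomial ℝ), q.degree < (n : ℕ) →
      ∃ c : ℕ → ℝ, q = ∑ m ∈ Finset.range n, Polynomial.C (c m) * B m := by
  intro n
  induction n with
  | zero =>
    intro q hq
    refine ⟨0, ?_⟩
    have : q = 0 := by
      rw [← Polynomial.degree_eq_bot]
      exact Nat.WithBot.lt_zero_iff.mp (by exact_mod_cast hq)
    simp [this]
  | succ n ih =>
    intro q hq
    have hdeg : (q - Polynomial.C (q.coeff n) * B n).degree < (n : ℕ) := by
      rw [Polynomial.degree_lt_iff_coeff_zero]
      intro k hk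
      rw [Polynomial.coeff_sub, Polynomial.coeff_C_mul]
      rcases eq_or_lt_of_le hk with rfl | hlt
      · rw [h1 n, mul_one, sub_self]
      · have hq0 : q.coeff k = 0 := by
          apply Polynomial.coeff_eq_zero_of_degree_lt
          exact lt_of_lt_of_le hq (by exact_mod_cast hlt : ((n+1:ℕ):WithBot ℕ) ≤ (k:ℕ))
        rw [hq0, h2 n k hlt, mul_zero, sub_self]
    obtain ⟨c, hc⟩ := ih _ hdeg
    refine ⟨Function.update c n (q.coeff n), ?_⟩
    rw [Finset.sum_range_succ, Function.update_self]
    have hsum : ∑ m ∈ Finset.range n, Polynomial.C (Function.update c n (q.coeff n) m) * B m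
        = ∑ m ∈ Finset.range n, Polynomial.C (c m) * B m := by
      apply Finset.sum_congr rfl
      intro m hm
      rw [Finset.mem_range] at hm
      rw [Function.update_of_ne (by omega)]
    rw [hsum, ← hc]
    ring

/-- Single-level (`k = 1`) Bernoulli-wavelet best approximation: if `f` is `M` times
continuously differentiable on `[0,1]` with `sup |f^{(M)}| ≤ M̃`, then there are real
coefficients `c_0, …, c_{M-1}` with
`(∫_0^1 (f(ζ) - Σ_{m<M} c_m B_m(ζ))² dζ)^{1/2} ≤ M̃ / (M! · 2^(2M-1))`. -/
theorem bernoulli_span_best_approx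
    (M : ℕ) (hM : 1 ≤ M) (f : ℝ → ℝ) (Mt : ℝ)
    (hf : ContDiffOn ℝ M f (Set.Icc 0 1))
    (hbound : ∀ ξ ∈ Set.Icc (0:ℝ) 1, |iteratedDerivWithin M f (Set.Icc 0 1) ξ| ≤ Mt) :
    ∃ c : ℕ → ℝ,
      Real.sqrt (∫ ζ in (0:ℝ)..1,
          (f ζ - ∑ m ∈ Finset.range M,
            c m * ((Polynomial.bernoulli m).map (algebraMap ℚ ℝ)).eval ζ) ^ 2)
        ≤ Mt / (M.factorial * 2 ^ (2 * M - 1)) := by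
  classical
  have hMt0 : 0 ≤ Mt := le_trans (abs_nonneg _) (hbound 0 (by norm_num))
  have hMR : (0:ℝ) < M := by exact_mod_cast hM
  have huniq : UniqueDiffOn ℝ (Set.Icc (0:ℝ) 1) := uniqueDiffOn_Icc one_pos
  set v : ℕ → ℝ := fun i => (1 + Real.cos ((2*i+1)*Real.pi/(2*M)))/2 with hvdef
  have hvmem : ∀ i, v i ∈ Set.Icc (0:ℝ) 1 := by
    intro i
    have h1 : -1 ≤ Real.cos ((2*i+1)*Real.pi/(2*M)) := Real.neg_one_le_cos _
    have h2 : Real.cos ((2*i+1)*Real.pi/(2*M)) ≤ 1 := Real.cos_le_one _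
    constructor <;> simp only [hvdef] <;> [linarith; linarith]
  have hθmem : ∀ i ∈ Finset.range M, (2*(i:ℝ)+1)*Real.pi/(2*M) ∈ Set.Icc 0 Real.pi := by
    intro i hi
    rw [Finset.mem_range] at hi
    constructor
    · positivity
    · rw [div_le_iff₀ (by positivity)]
      have : (2*(i:ℝ)+1) ≤ 2*M := by
        have : (i:ℝ) + 1 ≤ M := by exact_mod_cast hi
        linarith
      nlinarith [Real.pi_pos]
  have hinj : Set.InjOn v ↑(Finset.range M) := by
    intro i hi j hj hij
    simp only [Finset.coe_range, Set.mem_Iio] at hi hj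
    have hcos : Real.cos ((2*(i:ℝ)+1)*Real.pi/(2*M)) = Real.cos ((2*(j:ℝ)+1)*Real.pi/(2*M)) := by
      simp only [hvdef] at hij
      linarith
    have h1 := Real.injOn_cos (hθmem i (Finset.mem_range.2 hi)) (hθmem j (Finset.mem_range.2 hj))
      hcos
    have hπ := Real.pi_ne_zero
    field_simp at h1
    have h1' : (i:ℝ) = j := by linarith
    exact_mod_cast h1'
  set P := Lagrange.interpolate (Finset.range M) v (fun i => f (v i)) with hPdef
  have hPdeg : P.degree < ((M:ℕ) : WithBot ℕ) := by
    have := Lagrange.degree_interpolate_lt (fun i => f (v i)) hinj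
    simpa [hPdef] using this
  set W := Lagrange.nodal (Finset.range M) v with hWdef
  have hWM : W.coeff M = 1 := by
    have hmon : W.Monic := Lagrange.nodal_monic
    have hdeg : W.natDegree = M := by simp [hWdef, Lagrange.natDegree_nodal]
    rw [Polynomial.Monic, Polynomial.leadingCoeff, hdeg] at hmon
    exact hmon
  have hfactR : (0:ℝ) < M.factorial := by exact_mod_cast M.factorial_pos
  -- pointwise error bound
  have herr : ∀ x ∈ Set.Icc (0:ℝ) 1, |f x - P.eval x| ≤ Mt / M.factorial * (2/4^M) := by
    intro x hx
    have hRHS0 : 0 ≤ Mt / M.factorial * (2/4^M) :=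
      mul_nonneg (div_nonneg hMt0 hfactR.le) (by positivity)
    by_cases hxnode : ∃ i ∈ Finset.range M, x = v i
    · obtain ⟨i, hi, rfl⟩ := hxnode
      rw [Lagrange.eval_interpolate_at_node _ hinj hi]
      simpa using hRHS0
    · push_neg at hxnode
      have hWx : W.eval x ≠ 0 := Lagrange.eval_nodal_not_at_node (fun i hi => hxnode i hi)
      set lam := (f x - P.eval x) / W.eval x with hlamdef
      set R := P + Polynomial.C lam * W with hRdef
      set g : ℝ → ℝ := fun t => f t - R.eval t with hgdef
      have hgC : ContDiffOn ℝ M g (Set.Icc 0 1) := hf.sub ((poly_contDiff R).contDiffOn)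
      have himg : x ∉ (Finset.range M).image v := by
        simp only [Finset.mem_image]
        rintro ⟨i, hi, rfl⟩
        exact hxnode i hi rfl
      set z : Finset ℝ := insert x ((Finset.range M).image v) with hzdef
      have hzcard : z.card = M + 1 := by
        rw [hzdef, Finset.card_insert_of_notMem himg, Finset.card_image_of_injOn hinj,
          Finset.card_range]
      have hzsub : ∀ w ∈ z, w ∈ Set.Icc (0:ℝ) 1 := by
        intro w hw
        rw [hzdef, Finset.mem_insert] at hw
        rcases hw with rfl | hw
        · exact hx
        · obtain ⟨i, _, rfl⟩ := Finset.mem_image.mp hw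
          exact hvmem i
      have hzzero : ∀ w ∈ z, g w = 0 := by
        intro w hw
        rw [hzdef, Finset.mem_insert] at hw
        simp only [hgdef, hRdef, Polynomial.eval_add, Polynomial.eval_mul, Polynomial.eval_C]
        rcases hw with rfl | hw
        · rw [hlamdef, div_mul_cancel₀ _ hWx]
          ring
        · obtain ⟨i, hi, rfl⟩ := Finset.mem_image.mp hw
          rw [Lagrange.eval_interpolate_at_node _ hinj hi]
          have h0 : W.eval (v i) = 0 := Lagrange.eval_nodal_at_node hi
          rw [h0]
          ring
      set e := z.orderIsoOfFin hzcard with hedef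
      have hmono : StrictMono (fun i : Fin (M+1) => ((e i : z) : ℝ)) := by
        intro a b hab
        exact_mod_cast e.strictMono hab
      obtain ⟨ξ, hξmem, hξ0⟩ := iterated_rolle M g hgC (fun i => ((e i : z) : ℝ)) hmono
        (fun i => hzsub _ (e i).2) (fun i => hzzero _ (e i).2)
      -- split the iterated derivative
      have hsplit : iteratedDerivWithin M g (Set.Icc 0 1) ξ
          = iteratedDerivWithin M f (Set.Icc 0 1) ξ - (Polynomial.derivative^[M] R).eval ξ := by
        have h1 := iteratedDerivWithin_sub hξmem huniq (hf ξ hξmem)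
          ((poly_contDiff R).contDiffOn (s := Set.Icc (0:ℝ) 1) ξ hξmem)
        have h2 := iteratedDerivWithin_polynomial M R huniq ξ hξmem
        calc iteratedDerivWithin M g (Set.Icc 0 1) ξ
            = iteratedDerivWithin M (f - fun t => R.eval t) (Set.Icc 0 1) ξ := rfl
          _ = iteratedDerivWithin M f (Set.Icc 0 1) ξ
              - iteratedDerivWithin M (fun t => R.eval t) (Set.Icc 0 1) ξ := h1
          _ = iteratedDerivWithin M f (Set.Icc 0 1) ξ
              - (Polynomial.derivative^[M] R).eval ξ := by rw [h2]
      have hRdegle : R.natDegree ≤ M := by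
        rw [hRdef]
        apply le_trans (Polynomial.natDegree_add_le _ _)
        apply max_le
        · exact Polynomial.natDegree_le_iff_degree_le.mpr (le_of_lt hPdeg)
        · apply le_trans (Polynomial.natDegree_mul_le)
          have : W.natDegree = M := by simp [hWdef, Lagrange.natDegree_nodal]
          simp [this]
      have hRtop : (Polynomial.derivative^[M] R) = Polynomial.C ((M.factorial : ℝ) * lam) := by
        have hd : (Polynomial.derivative^[M] R).natDegree = 0 := by
          have := Polynomial.natDegree_iterate_derivative R M
          omega
        rw [Polynomial.eq_C_of_natDegree_le_zero (le_of_eq hd)]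
        congr 1
        rw [Polynomial.coeff_iterate_derivative]
        simp only [zero_add, Nat.descFactorial_self]
        have hRM : R.coeff M = lam := by
          rw [hRdef, Polynomial.coeff_add, Polynomial.coeff_C_mul]
          have hPM : P.coeff M = 0 := Polynomial.coeff_eq_zero_of_degree_lt hPdeg
          rw [hPM, hWM, mul_one, zero_add]
        rw [hRM]
        simp [nsmul_eq_mul]
      have hlameq : iteratedDerivWithin M f (Set.Icc 0 1) ξ = (M.factorial : ℝ) * lam := by
        have h := hξ0
        rw [hsplit, hRtop, Polynomial.eval_C] at h
        linarith
      have hlam_bound : |lam| ≤ Mt / M.factorial := by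
        have h1 : |(M.factorial:ℝ) * lam| ≤ Mt := by
          rw [← hlameq]; exact hbound ξ hξmem
        rw [abs_mul, abs_of_pos hfactR] at h1
        rw [le_div_iff₀ hfactR]
        linarith
      have hfx : f x - P.eval x = lam * W.eval x := by
        rw [hlamdef, div_mul_cancel₀ _ hWx]
      rw [hfx, abs_mul]
      have hWbound : |W.eval x| ≤ 2/4^M := cheb_nodal_bound M hM x hx
      exact mul_le_mul hlam_bound hWbound (abs_nonneg _) (div_nonneg hMt0 hfactR.le)
  -- representation of P in the Bernoulli basis
  obtain ⟨c, hc⟩ := monic_family_span (fun m => (Polynomial.bernoulli m).map (algebraMap ℚ ℝ))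
      bern_coeff_self bern_coeff_gt M P hPdeg
  refine ⟨c, ?_⟩
  have hfun : ∀ ζ : ℝ, ∑ m ∈ Finset.range M,
      c m * ((Polynomial.bernoulli m).map (algebraMap ℚ ℝ)).eval ζ = P.eval ζ := by
    intro ζ
    conv_rhs => rw [hc]
    rw [Polynomial.eval_finset_sum]
    apply Finset.sum_congr rfl
    intro m _
    rw [Polynomial.eval_mul, Polynomial.eval_C]
  simp only [hfun]
  set C0 := Mt / M.factorial * (2/4^M) with hC0def
  have hC0nn : 0 ≤ C0 := mul_nonneg (div_nonneg hMt0 hfactR.le) (by positivity)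
  have hcont : ContinuousOn (fun ζ => (f ζ - P.eval ζ)^2) (Set.Icc (0:ℝ) 1) :=
    (hf.continuousOn.sub (poly_contDiff P (n := 0)).continuous.continuousOn).pow 2
  have hint : IntervalIntegrable (fun ζ => (f ζ - P.eval ζ)^2) MeasureTheory.volume 0 1 := by
    apply ContinuousOn.intervalIntegrable
    rwa [Set.uIcc_of_le zero_le_one]
  have hle : (∫ ζ in (0:ℝ)..1, (f ζ - P.eval ζ)^2) ≤ C0^2 := by
    have hmono := intervalIntegral.integral_mono_on zero_le_one hint
      (intervalIntegrable_const (c := C0^2)) ?_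
    · simpa using hmono
    · intro ζ hζ
      calc (f ζ - P.eval ζ)^2 = |f ζ - P.eval ζ|^2 := (sq_abs _).symm
        _ ≤ C0^2 := pow_le_pow_left₀ (abs_nonneg _) (herr ζ hζ) 2
  have hsqrt : Real.sqrt (∫ ζ in (0:ℝ)..1, (f ζ - P.eval ζ)^2) ≤ C0 := by
    calc Real.sqrt (∫ ζ in (0:ℝ)..1, (f ζ - P.eval ζ)^2) ≤ Real.sqrt (C0^2) :=
          Real.sqrt_le_sqrt hle
      _ = C0 := Real.sqrt_sq hC0nn
  have hC0eq : C0 = Mt / (M.factorial * 2^(2*M-1)) := by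
    have h4 : (2:ℝ)^(2*M-1) * 2 = 4^M := by
      rw [← pow_succ, show 2*M-1+1 = 2*M by omega, show (4:ℝ) = 2^2 by norm_num, ← pow_mul]
    have h2e : (2:ℝ)^(2*M-1) ≠ 0 := by positivity
    have h4e : (4:ℝ)^M ≠ 0 := by positivity
    rw [hC0def]
    field_simp
    linear_combination Mt * h4
  rw [← hC0eq]
  exact hsqrt
end

section
/- Let k ≥ 1 and M ≥ 1 be integers and let f : [0,1] → ℝ be M times continuously differentiable with sup_{ξ∈[0,1]} |f^{(M)}(ξ)| ≤ M̃ for some real number M̃. Then there exists a function g : [0,1] → ℝ which, on each subinterval [(n−1)/2^{k−1}, n/2^{k−1}) for n = 1, …, 2^{k−1}, agrees with a polynomial of degree at most M−1, such that (∫_0^1 (f(ζ) − g(ζ))² dζ)^{1/2} ≤ (2^{1−k})^M · M̃ / (M! · 2^{2M−1}). -/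
open Set Polynomial Finset Real

lemma wba_idw_open {s : Set ℝ} (hs : IsOpen s) {x : ℝ} (hx : x ∈ s) (n : ℕ) (f : ℝ → ℝ) :
    iteratedDerivWithin n f s x = iteratedDeriv n f x := by
  rw [iteratedDerivWithin_eq_iteratedFDerivWithin, iteratedDeriv_eq_iteratedFDeriv,
    iteratedFDerivWithin_of_isOpen n hs hx]

lemma wba_idw_Ioo_Icc (n : ℕ) (f : ℝ → ℝ) {x : ℝ} (hx : x ∈ Ioo (0:ℝ) 1) :
    iteratedDerivWithin n f (Ioo 0 1) x = iteratedDerivWithin n f (Icc 0 1) x := by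
  have h := iteratedFDerivWithin_inter_open (𝕜 := ℝ) (f := f) (n := n)
    (s := Icc (0:ℝ) 1) (u := Ioo (0:ℝ) 1) isOpen_Ioo hx
  rw [Set.inter_eq_self_of_subset_right Set.Ioo_subset_Icc_self] at h
  rw [iteratedDerivWithin_eq_iteratedFDerivWithin, iteratedDerivWithin_eq_iteratedFDerivWithin, h]

lemma wba_contDiff_eval (q : ℝ[X]) (n : ℕ∞) : ContDiff ℝ n fun x => q.eval x := by
  induction q using Polynomial.induction_on' with
  | add p r hp hr => simpa [Polynomial.eval_add] using hp.add hr
  | monomial k c =>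
      simp only [Polynomial.eval_monomial]
      have : ContDiff ℝ n fun x : ℝ => c * x ^ k := (contDiff_id.pow k).const_smul c
      simpa using this

lemma wba_poly_iteratedDeriv (q : ℝ[X]) (n : ℕ) :
    iteratedDeriv n (fun x => q.eval x) = fun x => (Polynomial.derivative^[n] q).eval x := by
  induction n with
  | zero => simp
  | succ n ih =>
      rw [iteratedDeriv_succ, ih]
      funext x
      rw [Function.iterate_succ_apply']
      exact Polynomial.deriv _

lemma wba_T_deg : ∀ n : ℕ, (Polynomial.Chebyshev.T ℝ n).natDegree ≤ n ∧
    (Polynomial.Chebyshev.T ℝ n).coeff n = 2 ^ (n - 1) := by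
  intro n
  induction n using Nat.twoStepInduction with
  | zero => simp [Polynomial.Chebyshev.T_zero]
  | one => simp [Polynomial.Chebyshev.T_one]
  | more n ih ih1 =>
      have hrec : Polynomial.Chebyshev.T ℝ ((n:ℤ) + 2)
          = 2 * Polynomial.X * Polynomial.Chebyshev.T ℝ ((n:ℤ) + 1)
            - Polynomial.Chebyshev.T ℝ (n:ℤ) := Polynomial.Chebyshev.T_add_two ℝ n
      have hcast : ((n + 2 : ℕ) : ℤ) = (n : ℤ) + 2 := by push_cast; ring
      have hcast1 : ((n + 1 : ℕ) : ℤ) = (n : ℤ) + 1 := by push_cast; ring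
      rw [hcast, hrec, ← hcast1]
      have h2X : (2 * Polynomial.X * Polynomial.Chebyshev.T ℝ (n+1 : ℕ))
          = Polynomial.C (2:ℝ) * (Polynomial.X * Polynomial.Chebyshev.T ℝ (n+1 : ℕ)) := by
        rw [show (Polynomial.C (2:ℝ)) = 2 from map_ofNat Polynomial.C 2]; ring
      constructor
      · refine (Polynomial.natDegree_sub_le _ _).trans (max_le ?_ (ih.1.trans (by omega)))
        rw [h2X]
        refine (Polynomial.natDegree_mul_le).trans ?_
        have : (Polynomial.X * Polynomial.Chebyshev.T ℝ (n+1:ℕ)).natDegree ≤ 1 + (n+1) :=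
          (Polynomial.natDegree_mul_le).trans
            (add_le_add Polynomial.natDegree_X_le ih1.1)
        simpa using this.trans (by omega)
      · rw [Polynomial.coeff_sub, h2X, Polynomial.coeff_C_mul, Polynomial.coeff_X_mul,
          ih1.2, Polynomial.coeff_eq_zero_of_natDegree_lt (lt_of_le_of_lt ih.1 (by omega))]
        simp [pow_succ]
        ring

lemma wba_cheb_bound (m : ℕ) (hm : 1 ≤ m) (u : ℝ) (hu : u ∈ Icc (-1:ℝ) 1) :
    |∏ i ∈ Finset.range m, (u - Real.cos ((2*i+1)*π/(2*m)))| ≤ ((2:ℝ)^(m-1))⁻¹ := by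
  set θ : ℕ → ℝ := fun i => (2*i+1)*π/(2*m) with hθ
  have hmpos : (0:ℝ) < m := by exact_mod_cast hm
  have hθmem : ∀ i < m, θ i ∈ Ioo 0 π := by
    intro i hi
    constructor
    · apply div_pos (by positivity) (by positivity)
    · rw [div_lt_iff₀ (by positivity)]
      have : (2*(i:ℝ)+1) < 2*m := by
        have : (i:ℝ) + 1 ≤ m := by exact_mod_cast hi
        linarith
      nlinarith [Real.pi_pos]
  have hinj : ∀ i < m, ∀ j < m, Real.cos (θ i) = Real.cos (θ j) → i = j := by
    intro i hi j hj hij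
    have h1 := Real.injOn_cos (Ioo_subset_Icc_self (hθmem i hi)) (Ioo_subset_Icc_self (hθmem j hj)) hij
    simp only [hθ] at h1
    field_simp at h1
    replace h1 : i = j ∨ π = 0 := Or.inl (by exact_mod_cast (by linarith : (i:ℝ) = j))
    rcases h1 with h | h
    · exact h
    · exact absurd h Real.pi_ne_zero
  set W : ℝ[X] := ∏ i ∈ Finset.range m, (Polynomial.X - Polynomial.C (Real.cos (θ i))) with hW
  have hWmonic : W.Monic := monic_prod_of_monic _ _ fun i _ => monic_X_sub_C _
  have hWdeg : W.natDegree = m := by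
    rw [hW, Polynomial.natDegree_prod _ _ fun i _ => X_sub_C_ne_zero _]
    simp
  have hfact : Polynomial.Chebyshev.T ℝ m = Polynomial.C ((2:ℝ)^(m-1)) * W := by
    set D := Polynomial.Chebyshev.T ℝ m - Polynomial.C ((2:ℝ)^(m-1)) * W with hD
    have hDm : D.coeff m = 0 := by
      rw [hD, Polynomial.coeff_sub, Polynomial.coeff_C_mul, (wba_T_deg m).2,
        ← hWdeg, hWmonic.coeff_natDegree]
      ring
    have hDle : D.natDegree ≤ m := by
      refine (Polynomial.natDegree_sub_le _ _).trans (max_le (wba_T_deg m).1 ?_)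
      refine Polynomial.natDegree_mul_le.trans ?_
      simp [hWdeg]
    have hD0 : D = 0 := by
      by_cases h0 : D = 0
      · exact h0
      have hlt : D.natDegree < m := by
        rcases lt_or_eq_of_le hDle with h | h
        · exact h
        · exfalso
          apply Polynomial.leadingCoeff_ne_zero.mpr h0
          rw [Polynomial.leadingCoeff, h]
          exact hDm
      refine Polynomial.eq_zero_of_natDegree_lt_card_of_eval_eq_zero D
        (f := fun i : Fin m => Real.cos (θ i)) ?_ ?_ (by simpa using hlt)
      · intro i j hij
        exact Fin.ext (hinj i i.2 j j.2 hij)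
      · intro i
        have hT : (Polynomial.Chebyshev.T ℝ m).eval (Real.cos (θ i)) = Real.cos (m * θ i) := by
          exact_mod_cast Polynomial.Chebyshev.T_real_cos (θ i) m
        have hmθ : (m:ℝ) * θ i = (2*(i:ℤ)+1)*π/2 := by
          rw [hθ]; push_cast; field_simp
        have hcos0 : Real.cos ((m:ℝ) * θ i) = 0 := by
          rw [hmθ]; exact Real.cos_eq_zero_iff.mpr ⟨i, rfl⟩
        have hWz : W.eval (Real.cos (θ i)) = 0 := by
          rw [hW, Polynomial.eval_prod]
          exact Finset.prod_eq_zero (Finset.mem_range.mpr i.2) (by simp)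
        rw [hD]
        simp [Polynomial.eval_mul, hWz, hT, hcos0]
    exact sub_eq_zero.mp (hD ▸ hD0)
  have harccos : Real.cos (Real.arccos u) = u := Real.cos_arccos hu.1 hu.2
  have hevalW : W.eval u = ∏ i ∈ Finset.range m, (u - Real.cos (θ i)) := by
    simp [hW, Polynomial.eval_prod]
  have hevalT : (Polynomial.Chebyshev.T ℝ m).eval u = Real.cos (m * Real.arccos u) := by
    conv_lhs => rw [← harccos]
    exact_mod_cast Polynomial.Chebyshev.T_real_cos (Real.arccos u) m
  have hppos : (0:ℝ) < 2^(m-1) := by positivity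
  have h2 : (∏ i ∈ Finset.range m, (u - Real.cos (θ i)))
      = Real.cos (m * Real.arccos u) / 2^(m-1) := by
    rw [eq_div_iff (ne_of_gt hppos), ← hevalW, mul_comm, ← Polynomial.eval_C_mul, ← hfact, hevalT]
  rw [h2, abs_div, abs_of_pos hppos]
  calc |Real.cos (↑m * Real.arccos u)| / 2^(m-1) ≤ 1 / 2^(m-1) := by
        gcongr
        exact Real.abs_cos_le_one _
    _ = ((2:ℝ)^(m-1))⁻¹ := one_div _

lemma wba_rolle : ∀ (n : ℕ) (F : ℕ → ℝ → ℝ) (x : ℕ → ℝ),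
    (∀ j y, deriv (F j) y = F (j+1) y) →
    (∀ j, j ≤ n → ContinuousOn (F (j+1)) (Ioo (0:ℝ) 1)) →
    (∀ i j, i < j → j ≤ n+1 → x i < x j) →
    (∀ i, i ≤ n+1 → x i ∈ Icc (0:ℝ) 1) →
    (∀ i, i ≤ n+1 → F 0 (x i) = 0) →
    ContinuousOn (F 0) (Icc (x 0) (x (n+1))) →
    ∃ c ∈ Ioo (0:ℝ) 1, F (n+1) c = 0 := by
  intro n
  induction n with
  | zero =>
      intro F x hd _ hmono hmem hz hcont
      obtain ⟨c, hc, hc0⟩ := exists_deriv_eq_zero (hmono 0 1 one_pos le_rfl) hcont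
        ((hz 0 (by omega)).trans (hz 1 (by omega)).symm)
      exact ⟨c, ⟨lt_of_le_of_lt (hmem 0 (by omega)).1 hc.1,
        lt_of_lt_of_le hc.2 (hmem 1 (by omega)).2⟩, (hd 0 c).symm.trans hc0⟩
  | succ n IH =>
      intro F x hd hcont' hmono hmem hz hcont
      have key : ∀ i, i ≤ n+1 → ∃ c ∈ Ioo (x i) (x (i+1)), F 1 c = 0 := by
        intro i hi
        have hle1 : x 0 ≤ x i := by
          rcases Nat.eq_zero_or_pos i with h | h
          · rw [h]
          · exact (hmono 0 i h (by omega)).le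
        have hle2 : x (i+1) ≤ x (n+2) := by
          rcases eq_or_lt_of_le (show i+1 ≤ n+2 by omega) with h | h
          · rw [h]
          · exact (hmono (i+1) (n+2) h le_rfl).le
        obtain ⟨c, hc, hc0⟩ := exists_deriv_eq_zero (hmono i (i+1) (Nat.lt_succ_self i) (by omega))
          (hcont.mono (Icc_subset_Icc hle1 hle2))
          ((hz i (by omega)).trans (hz (i+1) (by omega)).symm)
        exact ⟨c, hc, (hd 0 c).symm.trans hc0⟩
      set y : ℕ → ℝ := fun i => if h : i ≤ n+1 then (key i h).choose else 0 with hy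
      have hyspec : ∀ i, i ≤ n+1 → y i ∈ Ioo (x i) (x (i+1)) ∧ F 1 (y i) = 0 := by
        intro i h
        simp only [hy, dif_pos h]
        exact ⟨(key i h).choose_spec.1, (key i h).choose_spec.2⟩
      have hxy01 : ∀ i, i ≤ n+1 → y i ∈ Ioo (0:ℝ) 1 := by
        intro i h
        exact ⟨lt_of_le_of_lt (hmem i (by omega)).1 (hyspec i h).1.1,
          lt_of_lt_of_le (hyspec i h).1.2 (hmem (i+1) (by omega)).2⟩
      obtain ⟨c, hc, hc0⟩ := IH (fun j => F (j+1)) y (fun j => hd (j+1))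
        (fun j hj => hcont' (j+1) (by omega))
        (by
          intro i j hij hj
          calc y i < x (i+1) := (hyspec i (by omega)).1.2
            _ ≤ x j := by
                rcases eq_or_lt_of_le (show i+1 ≤ j by omega) with h | h
                · rw [h]
                · exact (hmono (i+1) j h (by omega)).le
            _ < y j := (hyspec j hj).1.1)
        (fun i hi => Ioo_subset_Icc_self (hxy01 i hi))
        (fun i hi => (hyspec i hi).2)
        ((hcont' 0 (by omega)).mono (by
          intro z hz'
          exact ⟨lt_of_lt_of_le (hxy01 0 (by omega)).1 hz'.1,
            lt_of_le_of_lt hz'.2 (hxy01 (n+1) le_rfl).2⟩))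
      exact ⟨c, hc, hc0⟩

lemma wba_interval (M : ℕ) (hM : 1 ≤ M) (f : ℝ → ℝ) (Mt : ℝ)
    (hf : ContDiffOn ℝ M f (Set.Icc 0 1))
    (hbound : ∀ ξ ∈ Set.Icc (0:ℝ) 1, |iteratedDerivWithin M f (Set.Icc 0 1) ξ| ≤ Mt)
    (a b : ℝ) (ha : 0 ≤ a) (hab : a < b) (hb : b ≤ 1) :
    ∃ p : ℝ[X], p.natDegree ≤ M - 1 ∧
      ∀ y ∈ Set.Icc a b, |f y - p.eval y| ≤
        Mt / M.factorial * (((b-a)/2)^M * ((2:ℝ)^(M-1))⁻¹) := by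
  obtain ⟨m, rfl⟩ : ∃ m, M = m + 1 := ⟨M - 1, by omega⟩
  have hMt : 0 ≤ Mt := le_trans (abs_nonneg _) (hbound 0 ⟨le_rfl, zero_le_one⟩)
  have hba2 : (0:ℝ) < (b - a)/2 := by linarith
  set θ : ℕ → ℝ := fun i => (2*i+1)*π/(2*(m+1:ℕ)) with hθdef
  have hmpos : (0:ℝ) < ((m+1:ℕ):ℝ) := by positivity
  have hθmem : ∀ i < m+1, θ i ∈ Ioo 0 π := by
    intro i hi
    constructor
    · apply div_pos (by positivity) (by positivity)
    · rw [div_lt_iff₀ (by positivity)]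
      have : (2*(i:ℝ)+1) < 2*((m+1:ℕ):ℝ) := by
        have : (i:ℝ) + 1 ≤ ((m+1:ℕ):ℝ) := by exact_mod_cast hi
        linarith
      nlinarith [Real.pi_pos]
  have hcosmem : ∀ i < m+1, Real.cos (θ i) ∈ Ioo (-1:ℝ) 1 := by
    intro i hi
    obtain ⟨h1, h2⟩ := hθmem i hi
    constructor
    · have := Real.strictAntiOn_cos (Ioo_subset_Icc_self (hθmem i hi)) (right_mem_Icc.mpr Real.pi_pos.le) h2
      simpa [Real.cos_pi] using this
    · have := Real.strictAntiOn_cos (left_mem_Icc.mpr Real.pi_pos.le) (Ioo_subset_Icc_self (hθmem i hi)) h1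
      simpa [Real.cos_zero] using this
  have hθinj : ∀ i < m+1, ∀ j < m+1, Real.cos (θ i) = Real.cos (θ j) → i = j := by
    intro i hi j hj hij
    have h1 := Real.injOn_cos (Ioo_subset_Icc_self (hθmem i hi)) (Ioo_subset_Icc_self (hθmem j hj)) hij
    simp only [hθdef] at h1
    field_simp at h1
    replace h1 : i = j ∨ π = 0 := Or.inl (by exact_mod_cast (by linarith : (i:ℝ) = j))
    rcases h1 with h | h
    · exact h
    · exact absurd h Real.pi_ne_zero
  set t : ℕ → ℝ := fun i => (a+b)/2 + (b-a)/2 * Real.cos (θ i) with htdef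
  have htmem : ∀ i < m+1, t i ∈ Ioo a b := by
    intro i hi
    obtain ⟨h1, h2⟩ := hcosmem i hi
    constructor
    · simp only [htdef]; nlinarith
    · simp only [htdef]; nlinarith
  have htinj : Set.InjOn t ↑(Finset.range (m+1)) := by
    intro i hi j hj hij
    simp only [Finset.coe_range, Set.mem_Iio] at hi hj
    have : Real.cos (θ i) = Real.cos (θ j) := by
      simp only [htdef] at hij
      have := hba2
      nlinarith [hij]
    exact hθinj i hi j hj this
  set p : ℝ[X] := Lagrange.interpolate (Finset.range (m+1)) t (fun i => f (t i)) with hpdef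
  have hpdeg : p.natDegree ≤ m := by
    have hdlt := Lagrange.degree_interpolate_lt (r := fun i => f (t i)) htinj
    rw [Finset.card_range] at hdlt
    by_cases hp0 : p = 0
    · simp [hp0]
    · have := (Polynomial.natDegree_lt_iff_degree_lt hp0).mpr (by exact_mod_cast hdlt)
      omega
  refine ⟨p, by simpa using hpdeg, ?_⟩
  intro y hy
  have hRHS0 : 0 ≤ Mt / (m+1).factorial * (((b-a)/2)^(m+1) * ((2:ℝ)^(m+1-1))⁻¹) := by
    apply mul_nonneg (div_nonneg hMt (by positivity)) (by positivity)
  by_cases hnode : ∃ i ∈ Finset.range (m+1), t i = y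
  · obtain ⟨i, hi, rfl⟩ := hnode
    rw [hpdef, Lagrange.eval_interpolate_at_node _ htinj hi]
    simpa using hRHS0
  · push_neg at hnode
    set ω : ℝ[X] := ∏ i ∈ Finset.range (m+1), (Polynomial.X - Polynomial.C (t i)) with hωdef
    have hωmonic : ω.Monic := monic_prod_of_monic _ _ fun i _ => monic_X_sub_C _
    have hωdeg : ω.natDegree = m+1 := by
      rw [hωdef, Polynomial.natDegree_prod _ _ fun i _ => X_sub_C_ne_zero _]
      simp
    have hωy : ω.eval y ≠ 0 := by
      rw [hωdef, Polynomial.eval_prod]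
      apply Finset.prod_ne_zero_iff.mpr
      intro i hi
      simp only [Polynomial.eval_sub, Polynomial.eval_X, Polynomial.eval_C]
      exact sub_ne_zero.mpr (fun h => hnode i hi (h.symm))
    set lam : ℝ := (f y - p.eval y) / ω.eval y with hlamdef
    set q : ℝ[X] := p + Polynomial.C lam * ω with hqdef
    set G : ℝ → ℝ := f - fun z => q.eval z with hGdef
    have hωnode : ∀ i ∈ Finset.range (m+1), ω.eval (t i) = 0 := by
      intro i hi
      rw [hωdef, Polynomial.eval_prod]
      exact Finset.prod_eq_zero hi (by simp)
    have hGy : G y = 0 := by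
      simp only [hGdef, hqdef, Pi.sub_apply, Polynomial.eval_add, Polynomial.eval_mul,
        Polynomial.eval_C, hlamdef]
      rw [div_mul_cancel₀ _ hωy]
      ring
    have hGnode : ∀ i ∈ Finset.range (m+1), G (t i) = 0 := by
      intro i hi
      simp only [hGdef, hqdef, Pi.sub_apply, Polynomial.eval_add, Polynomial.eval_mul,
        Polynomial.eval_C, hωnode i hi, mul_zero, add_zero]
      rw [hpdef, Lagrange.eval_interpolate_at_node _ htinj hi]
      ring
    -- the zero set
    set S : Finset ℝ := insert y ((Finset.range (m+1)).image t) with hSdef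
    have hynotmem : y ∉ (Finset.range (m+1)).image t := by
      intro hmem
      obtain ⟨i, hi, hti⟩ := Finset.mem_image.mp hmem
      exact hnode i hi hti
    have hScard : S.card = m + 2 := by
      rw [hSdef, Finset.card_insert_of_notMem hynotmem, Finset.card_image_of_injOn htinj,
        Finset.card_range]
    have hS01 : ∀ z ∈ S, z ∈ Icc (0:ℝ) 1 := by
      intro z hz
      rw [hSdef, Finset.mem_insert] at hz
      rcases hz with rfl | hz
      · exact ⟨ha.trans hy.1, hy.2.trans hb⟩
      · obtain ⟨i, hi, rfl⟩ := Finset.mem_image.mp hz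
        obtain ⟨h1, h2⟩ := htmem i (Finset.mem_range.mp hi)
        exact ⟨ha.trans h1.le, h2.le.trans hb⟩
    have hGS : ∀ z ∈ S, G z = 0 := by
      intro z hz
      rw [hSdef, Finset.mem_insert] at hz
      rcases hz with rfl | hz
      · exact hGy
      · obtain ⟨i, hi, rfl⟩ := Finset.mem_image.mp hz
        exact hGnode i hi
    set x : ℕ → ℝ := fun i => if h : i < m+2 then ((S.orderIsoOfFin hScard ⟨i, h⟩ : ℝ)) else 0
      with hxdef
    have hxS : ∀ i, i ≤ m+1 → x i ∈ S := by
      intro i hi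
      simp only [hxdef, dif_pos (show i < m+2 by omega)]
      exact (S.orderIsoOfFin hScard ⟨i, by omega⟩).2
    have hxmono : ∀ i j, i < j → j ≤ m+1 → x i < x j := by
      intro i j hij hj
      simp only [hxdef, dif_pos (show i < m+2 by omega), dif_pos (show j < m+2 by omega)]
      exact Subtype.coe_lt_coe.mpr ((S.orderIsoOfFin hScard).strictMono (Fin.mk_lt_mk.mpr hij))
    -- derivative chain
    set F : ℕ → ℝ → ℝ := fun j => iteratedDeriv j G with hFdef
    have hGIoo : ContDiffOn ℝ (m+1) G (Ioo 0 1) :=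
      (hf.mono Ioo_subset_Icc_self).sub ((wba_contDiff_eval q _).contDiffOn)
    have hGcont : ContinuousOn G (Icc 0 1) :=
      hf.continuousOn.sub ((wba_contDiff_eval q 0).continuous.continuousOn)
    obtain ⟨c, hc, hFc⟩ := wba_rolle m F x
      (fun j z => by rw [hFdef, ← iteratedDeriv_succ])
      (by
        intro j hj
        have h1 : ContinuousOn (iteratedDerivWithin (j+1) G (Ioo 0 1)) (Ioo 0 1) :=
          hGIoo.continuousOn_iteratedDerivWithin
            (by exact_mod_cast Nat.cast_le.mpr (show j+1 ≤ m+1 by omega))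
            isOpen_Ioo.uniqueDiffOn
        exact h1.congr fun z hz => (wba_idw_open isOpen_Ioo hz (j+1) G).symm)
      hxmono
      (fun i hi => hS01 _ (hxS i hi))
      (fun i hi => by
        simp only [hFdef, iteratedDeriv_zero]
        exact hGS _ (hxS i hi))
      (by
        simp only [hFdef, iteratedDeriv_zero]
        exact hGcont.mono (Icc_subset_Icc (hS01 _ (hxS 0 (by omega))).1
          (hS01 _ (hxS (m+1) le_rfl)).2))
    -- compute the iterated derivative of G at c
    have hc01 : c ∈ Icc (0:ℝ) 1 := Ioo_subset_Icc_self hc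
    have hq_iter : Polynomial.derivative^[m+1] q = Polynomial.C (((m+1).factorial : ℝ) * lam) := by
      have hqdeg : q.natDegree ≤ m+1 := by
        refine (Polynomial.natDegree_add_le _ _).trans (max_le (hpdeg.trans (by omega)) ?_)
        exact Polynomial.natDegree_mul_le.trans (by simp [hωdeg])
      have hdeg0 : (Polynomial.derivative^[m+1] q).natDegree = 0 :=
        le_antisymm ((Polynomial.natDegree_iterate_derivative q (m+1)).trans (by omega)) (Nat.zero_le _)
      have hcoeffq : q.coeff (m+1) = lam := by
        rw [hqdef, Polynomial.coeff_add, Polynomial.coeff_C_mul,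
          Polynomial.coeff_eq_zero_of_natDegree_lt (lt_of_le_of_lt hpdeg (by omega))]
        have : ω.coeff (m+1) = 1 := by
          have := hωmonic.coeff_natDegree
          rwa [hωdeg] at this
        rw [this]
        ring
      rw [Polynomial.eq_C_of_natDegree_le_zero (le_of_eq hdeg0),
        Polynomial.coeff_iterate_derivative, zero_add, Nat.descFactorial_self, hcoeffq]
      congr 1
      simp [nsmul_eq_mul]
    have e1 : iteratedDerivWithin (m+1) G (Ioo 0 1) c = 0 := by
      rw [wba_idw_open isOpen_Ioo hc]
      exact hFc
    have e2 : iteratedDerivWithin (m+1) G (Ioo 0 1) c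
        = iteratedDerivWithin (m+1) f (Ioo 0 1) c
          - iteratedDerivWithin (m+1) (fun z => q.eval z) (Ioo 0 1) c := by
      rw [hGdef]
      exact iteratedDerivWithin_sub hc isOpen_Ioo.uniqueDiffOn
        ((hf.mono Ioo_subset_Icc_self) c hc) ((wba_contDiff_eval q _).contDiffOn c hc)
    have e3 : iteratedDerivWithin (m+1) f (Ioo 0 1) c
        = iteratedDerivWithin (m+1) f (Icc 0 1) c := wba_idw_Ioo_Icc _ _ hc
    have e4 : iteratedDerivWithin (m+1) (fun z => q.eval z) (Ioo 0 1) c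
        = ((m+1).factorial : ℝ) * lam := by
      rw [wba_idw_open isOpen_Ioo hc, wba_poly_iteratedDeriv, hq_iter]
      simp
    have hkey : ((m+1).factorial : ℝ) * lam = iteratedDerivWithin (m+1) f (Icc 0 1) c := by
      have := e1
      rw [e2, e3, e4] at this
      linarith
    have hfacpos : (0:ℝ) < (m+1).factorial := by
      exact_mod_cast (m+1).factorial_pos
    have hlam : |lam| ≤ Mt / (m+1).factorial := by
      have h1 : |((m+1).factorial : ℝ) * lam| ≤ Mt := by
        rw [hkey]; exact hbound c hc01
      rw [abs_mul, abs_of_pos hfacpos] at h1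
      rw [le_div_iff₀ hfacpos]
      linarith
    -- bound on ω
    set u : ℝ := (2*y - (a+b))/(b-a) with hudef
    have humem : u ∈ Icc (-1:ℝ) 1 := by
      constructor
      · rw [hudef, le_div_iff₀ (by linarith)]
        linarith [hy.1]
      · rw [hudef, div_le_iff₀ (by linarith)]
        linarith [hy.2]
    have hbane : b - a ≠ 0 := by linarith
    have hmu : ((b-a)/2) * u = y - (a+b)/2 := by
      rw [hudef]
      field_simp
    have hfac : ∀ i, y - t i = ((b-a)/2) * (u - Real.cos (θ i)) := by
      intro i
      simp only [htdef]
      rw [mul_sub, hmu]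
      ring
    have hωeval : ω.eval y = ((b-a)/2)^(m+1) * ∏ i ∈ Finset.range (m+1), (u - Real.cos (θ i)) := by
      rw [hωdef, Polynomial.eval_prod]
      simp only [Polynomial.eval_sub, Polynomial.eval_X, Polynomial.eval_C]
      rw [Finset.prod_congr rfl (fun i _ => hfac i), Finset.prod_mul_distrib,
        Finset.prod_const, Finset.card_range]
    have hcheb : |∏ i ∈ Finset.range (m+1), (u - Real.cos (θ i))| ≤ ((2:ℝ)^m)⁻¹ := by
      have := wba_cheb_bound (m+1) (by omega) u humem
      simpa [hθdef] using this
    have hωbound : |ω.eval y| ≤ ((b-a)/2)^(m+1) * ((2:ℝ)^m)⁻¹ := by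
      rw [hωeval, abs_mul, abs_pow, abs_of_pos hba2]
      exact mul_le_mul_of_nonneg_left hcheb (by positivity)
    have hfy : f y - p.eval y = lam * ω.eval y := (div_mul_cancel₀ _ hωy).symm
    rw [hfy, abs_mul]
    have := mul_le_mul hlam hωbound (abs_nonneg _) (div_nonneg hMt hfacpos.le)
    simpa using this

/-- Multi-level Bernoulli-wavelet best approximation: if `f` is `M` times continuously
differentiable on `[0,1]` with `sup |f^{(M)}| ≤ M̃`, then there is a function `g` that
agrees with a polynomial of degree at most `M-1` on each dyadic subinterval
`[(n-1)/2^(k-1), n/2^(k-1))`, `n = 1, …, 2^(k-1)`, and satisfies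
`(∫_0^1 (f - g)²)^{1/2} ≤ (2^(1-k))^M · M̃ / (M! · 2^(2M-1))`. -/
theorem wavelet_best_approx
    (k M : ℕ) (hk : 1 ≤ k) (hM : 1 ≤ M) (f : ℝ → ℝ) (Mt : ℝ)
    (hf : ContDiffOn ℝ M f (Set.Icc 0 1))
    (hbound : ∀ ξ ∈ Set.Icc (0:ℝ) 1, |iteratedDerivWithin M f (Set.Icc 0 1) ξ| ≤ Mt) :
    ∃ g : ℝ → ℝ,
      (∀ n ∈ Finset.Icc (1 : ℕ) (2 ^ (k - 1)), ∃ p : Polynomial ℝ, p.natDegree ≤ M - 1 ∧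
        ∀ ζ ∈ Set.Ico (((n : ℝ) - 1) / 2 ^ (k - 1)) ((n : ℝ) / 2 ^ (k - 1)),
          g ζ = p.eval ζ) ∧
      Real.sqrt (∫ ζ in (0:ℝ)..1, (f ζ - g ζ) ^ 2)
        ≤ ((2 : ℝ) ^ ((1 : ℤ) - (k : ℤ))) ^ M * Mt / (M.factorial * 2 ^ (2 * M - 1)) := by
  have hMt : 0 ≤ Mt := le_trans (abs_nonneg _) (hbound 0 ⟨le_rfl, zero_le_one⟩)
  set N : ℕ := 2 ^ (k - 1) with hNdef
  have hN1 : 1 ≤ N := Nat.one_le_two_pow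
  have hNr : ((N:ℝ)) = 2 ^ (k-1) := by push_cast [hNdef]; ring
  have hNpos : (0:ℝ) < N := by positivity
  set E : ℝ := Mt / M.factorial * (((1/(N:ℝ))/2)^M * ((2:ℝ)^(M-1))⁻¹) with hEdef
  have hE0 : 0 ≤ E := by
    apply mul_nonneg (div_nonneg hMt (by positivity)) (by positivity)
  have hP : ∀ j : ℕ, j < N → ∃ p : ℝ[X], p.natDegree ≤ M - 1 ∧
      ∀ y ∈ Set.Icc ((j:ℝ)/N) (((j:ℝ)+1)/N), |f y - p.eval y| ≤ E := by
    intro j hj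
    have hlen : ((j:ℝ)+1)/N - (j:ℝ)/N = 1/N := by
      field_simp
      ring
    obtain ⟨p, hdeg, hbd⟩ := wba_interval M hM f Mt hf hbound ((j:ℝ)/N) (((j:ℝ)+1)/N)
      (by positivity)
      (by have h1 : (j:ℝ) < (j:ℝ)+1 := by linarith
          exact div_lt_div_of_pos_right h1 hNpos)
      (by rw [div_le_one hNpos]
          have : (j:ℝ) + 1 ≤ N := by exact_mod_cast hj
          linarith)
    refine ⟨p, hdeg, fun y hy => ?_⟩
    have := hbd y hy
    rwa [hlen] at this
  set Q : ℕ → ℝ[X] := fun j => if h : j < N then (hP j h).choose else 0 with hQdef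
  have hQspec : ∀ j (h : j < N), (Q j).natDegree ≤ M - 1 ∧
      ∀ y ∈ Set.Icc ((j:ℝ)/N) (((j:ℝ)+1)/N), |f y - (Q j).eval y| ≤ E := by
    intro j h
    simp only [hQdef, dif_pos h]
    exact ⟨(hP j h).choose_spec.1, (hP j h).choose_spec.2⟩
  set g : ℝ → ℝ := fun ζ => (Q (min (Nat.floor (ζ * N)) (N-1))).eval ζ with hgdef
  refine ⟨g, ?_, ?_⟩
  · -- piecewise polynomial property
    intro n hn
    rw [Finset.mem_Icc] at hn
    have hn1 : 1 ≤ n := hn.1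
    have hnN : n ≤ N := hn.2
    refine ⟨Q (n-1), (hQspec (n-1) (by omega)).1, ?_⟩
    intro ζ hζ
    rw [Set.mem_Ico] at hζ
    have h2N : ((2:ℝ)^(k-1)) = (N:ℝ) := hNr.symm
    rw [h2N] at hζ
    have hfloor : Nat.floor (ζ * N) = n - 1 := by
      have hζ0 : 0 ≤ ζ := by
        have : ((n:ℝ) - 1)/N ≤ ζ := hζ.1
        have hn0 : (0:ℝ) ≤ ((n:ℝ)-1)/N := by
          apply div_nonneg _ hNpos.le
          have : (1:ℝ) ≤ n := by exact_mod_cast hn1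
          linarith
        linarith
      rw [Nat.floor_eq_iff (by positivity)]
      constructor
      · have := hζ.1
        rw [div_le_iff₀ hNpos] at this
        have hcast : ((n-1:ℕ):ℝ) = (n:ℝ) - 1 := by
          push_cast [hn1]
          ring
        rw [hcast]
        linarith
      · have := hζ.2
        rw [lt_div_iff₀ hNpos] at this
        have hcast : ((n-1:ℕ):ℝ) + 1 = (n:ℝ) := by
          push_cast [hn1]
          ring
        rw [hcast]
        linarith
    have hmin : min (Nat.floor (ζ * N)) (N-1) = n - 1 := by
      rw [hfloor]
      omega
    simp only [hgdef, hmin]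
  · -- the integral bound
    have hpt : ∀ ζ ∈ Set.Icc (0:ℝ) 1, |f ζ - g ζ| ≤ E := by
      intro ζ hζ
      set j : ℕ := min (Nat.floor (ζ * N)) (N-1) with hjdef
      have hjN : j < N := by omega
      have hζmem : ζ ∈ Set.Icc ((j:ℝ)/N) (((j:ℝ)+1)/N) := by
        constructor
        · rw [div_le_iff₀ hNpos]
          have h1 : (j:ℝ) ≤ Nat.floor (ζ * N) := by
            exact_mod_cast Nat.cast_le.mpr (min_le_left _ _)
          have h2 : (Nat.floor (ζ * N) : ℝ) ≤ ζ * N := Nat.floor_le (mul_nonneg hζ.1 hNpos.le)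
          linarith
        · rw [le_div_iff₀ hNpos]
          by_cases hcase : Nat.floor (ζ * N) ≤ N - 1
          · have hj' : j = Nat.floor (ζ * N) := by omega
            have := Nat.lt_floor_add_one (ζ * N)
            rw [hj']
            linarith
          · have hj' : j = N - 1 := by omega
            have hjc : ((j:ℝ) + 1) = N := by
              rw [hj']
              push_cast [hN1]
              ring
            rw [hjc]
            nlinarith [hζ.2, hNpos]
      exact (hQspec j hjN).2 ζ hζmem
    have hIle : (∫ ζ in (0:ℝ)..1, (f ζ - g ζ) ^ 2) ≤ E^2 := by
      by_cases hint : IntervalIntegrable (fun ζ => (f ζ - g ζ)^2) MeasureTheory.volume 0 1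
      · calc (∫ ζ in (0:ℝ)..1, (f ζ - g ζ) ^ 2) ≤ ∫ _ in (0:ℝ)..1, E^2 := by
              apply intervalIntegral.integral_mono_on zero_le_one hint intervalIntegrable_const
              intro z hz
              calc (f z - g z)^2 = |f z - g z|^2 := (sq_abs _).symm
                _ ≤ E^2 := by
                    apply pow_le_pow_left₀ (abs_nonneg _) (hpt z hz)
          _ = E^2 := by simp
      · rw [intervalIntegral.integral_undef hint]
        positivity
    have hsq : Real.sqrt (∫ ζ in (0:ℝ)..1, (f ζ - g ζ) ^ 2) ≤ E := by
      calc Real.sqrt (∫ ζ in (0:ℝ)..1, (f ζ - g ζ) ^ 2) ≤ Real.sqrt (E^2) :=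
            Real.sqrt_le_sqrt hIle
        _ = E := Real.sqrt_sq hE0
    refine hsq.trans (le_of_eq ?_)
    -- E = RHS
    rw [hEdef]
    have h2k : ((N:ℝ)) * 2 = 2^k := by
      rw [hNr, ← pow_succ]
      congr 1
      omega
    have hzpow : ((2:ℝ) ^ ((1:ℤ) - (k:ℤ)))^M = (2 / 2^k)^M := by
      congr 1
      rw [zpow_sub₀ (two_ne_zero), zpow_one, zpow_natCast]
    have h2M1 : (2:ℝ)^(2*M-1) = 2^M * 2^(M-1) := by
      rw [← pow_add]
      congr 1
      omega
    rw [hzpow, h2M1]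
    have hNne : ((N:ℝ)) ≠ 0 := ne_of_gt hNpos
    have h2kne : ((2:ℝ)^k) ≠ 0 := by positivity
    field_simp
    rw [← h2k]
    ring_nf
    field_simp
    rw [mul_assoc, ← mul_pow]
    norm_num
end

section
/- Let L > 0 and let F : [0,1] × ℝ³ → ℝ be such that ζ ↦ F(ζ, v) is measurable for each v ∈ ℝ³, ζ ↦ F(ζ, 0, 0, 0) is integrable on [0,1], and |F(ζ, a, b, c) − F(ζ, a', b', c')| ≤ L·(|a − a'| + |b − b'| + |c − c'|) for all ζ ∈ [0,1] and all (a,b,c), (a',b',c') ∈ ℝ³. Define the cost functional J(z₁, z₂, u) = ∫_0^1 F(ζ, z₁(ζ), z₂(ζ), u(ζ)) dζ on triples of square-integrable functions on [0,1]. Let Γ be a set of such triples, let Γ_m̂ ⊆ Γ, and suppose there exists (z₁*, z₂*, u*) ∈ Γ with J(z₁*, z₂*, u*) = inf_{Γ} J, and there exists (ẑ₁, ẑ₂, û) ∈ Γ_m̂ with ‖z₁* − ẑ₁‖_{L²} ≤ M̃₁/(m̂!·2^{2m̂−1}), ‖z₂* − ẑ₂‖_{L²} ≤ M̃₂/(m̂!·2^{2m̂−1}),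 and ‖u* − û‖_{L²} ≤ M̃₃/(m̂!·2^{2m̂−1}) for some integer m̂ ≥ 1 and nonnegative reals M̃₁, M̃₂, M̃₃. Then 0 ≤ inf_{Γ_m̂} J − inf_{Γ} J ≤ L·(M̃₁ + M̃₂ + M̃₃)/(m̂!·2^{2m̂−1}). -/
set_option maxHeartbeats 1000000

open MeasureTheory

lemma aux_abs_int (f : ℝ → ℝ) (hm : Measurable f)
    (h2 : IntegrableOn (fun ζ => f ζ ^ 2) (Set.Ioc (0:ℝ) 1)) :
    IntegrableOn (fun ζ => |f ζ|) (Set.Ioc (0:ℝ) 1) := by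
  have hc : IntegrableOn (fun _ : ℝ => (1:ℝ)) (Set.Ioc (0:ℝ) 1) :=
    (integrableOn_const_iff).mpr (Or.inr (by simp [Real.volume_Ioc]))
  have hg : IntegrableOn (fun ζ => ((1:ℝ) + f ζ ^ 2) / 2) (Set.Ioc (0:ℝ) 1) :=
    (hc.add h2).div_const 2
  refine Integrable.mono' hg hm.abs.aestronglyMeasurable ?_
  refine Filter.Eventually.of_forall fun ζ => ?_
  rw [Real.norm_eq_abs, abs_abs]
  nlinarith [sq_nonneg (|f ζ| - 1), sq_abs (f ζ)]

lemma aux_int_abs_le_sqrt (f : ℝ → ℝ) (hm : Measurable f)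
    (h2 : IntegrableOn (fun ζ => f ζ ^ 2) (Set.Ioc (0:ℝ) 1)) :
    ∫ ζ in Set.Ioc (0:ℝ) 1, |f ζ| ≤ Real.sqrt (∫ ζ in Set.Ioc (0:ℝ) 1, f ζ ^ 2) := by
  set S := ∫ ζ in Set.Ioc (0:ℝ) 1, f ζ ^ 2 with hS
  have hS0 : 0 ≤ S := integral_nonneg fun ζ => sq_nonneg _
  have hsq : Real.sqrt S * Real.sqrt S = S := Real.mul_self_sqrt hS0
  have key : ∀ δ : ℝ, 0 < δ → ∫ ζ in Set.Ioc (0:ℝ) 1, |f ζ| ≤ Real.sqrt S + δ := by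
    intro δ hδ
    set ε := Real.sqrt S + δ with hε
    have hsn : 0 ≤ Real.sqrt S := Real.sqrt_nonneg S
    have hε0 : 0 < ε := by positivity
    have hconst : IntegrableOn (fun _ : ℝ => ε / 2) (Set.Ioc (0:ℝ) 1) :=
      (integrableOn_const_iff).mpr (Or.inr (by simp [Real.volume_Ioc]))
    have hint2 : IntegrableOn (fun ζ => f ζ ^ 2 / (2 * ε)) (Set.Ioc (0:ℝ) 1) :=
      h2.div_const _
    have hintabs := aux_abs_int f hm h2
    have hle : ∫ ζ in Set.Ioc (0:ℝ) 1, |f ζ|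
        ≤ ∫ ζ in Set.Ioc (0:ℝ) 1, (ε / 2 + f ζ ^ 2 / (2 * ε)) := by
      refine integral_mono hintabs (hconst.add hint2) fun ζ => ?_
      have key2 : |f ζ| ≤ (ε ^ 2 + f ζ ^ 2) / (2 * ε) := by
        rw [le_div_iff₀ (by positivity)]
        nlinarith [sq_nonneg (|f ζ| - ε), sq_abs (f ζ)]
      refine key2.trans (le_of_eq ?_)
      field_simp
    have heq : ∫ ζ in Set.Ioc (0:ℝ) 1, (ε / 2 + f ζ ^ 2 / (2 * ε))
        = ε / 2 + S / (2 * ε) := by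
      rw [integral_add hconst hint2, setIntegral_const, integral_div]
      simp [Real.volume_Ioc]
      rfl
    rw [heq] at hle
    have h2' : S / (2 * ε) ≤ Real.sqrt S / 2 := by
      rw [div_le_div_iff₀ (by positivity) (by norm_num)]
      nlinarith [hsq, hsn, hδ]
    linarith
  by_contra hcon
  push_neg at hcon
  have := key (((∫ ζ in Set.Ioc (0:ℝ) 1, |f ζ|) - Real.sqrt S) / 2) (by linarith)
  linarith

/-- Error bound for the approximate optimal cost: with a Lipschitz integrand `F`,
cost functional `J`, admissible set `Γ`, subset `Γ_mhat ⊆ Γ`, a minimizer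
`z* ∈ Γ` of `J` over `Γ`, and an element `ẑ ∈ Γ_mhat` within wavelet-approximation
distance of `z*`, one has
`0 ≤ inf_{Γ_mhat} J - inf_Γ J ≤ L (M̃₁+M̃₂+M̃₃)/(mhat! · 2^(2mhat-1))`. -/
theorem inf_cost_error_bound
    (L : ℝ) (hL : 0 < L) (F : ℝ → ℝ → ℝ → ℝ → ℝ)
    (hmeas : ∀ a b c : ℝ, Measurable fun ζ => F ζ a b c)
    (hint : IntegrableOn (fun ζ => F ζ 0 0 0) (Set.Icc 0 1))
    (hLip : ∀ ζ ∈ Set.Icc (0:ℝ) 1, ∀ a b c a' b' c' : ℝ,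
      |F ζ a b c - F ζ a' b' c'| ≤ L * (|a - a'| + |b - b'| + |c - c'|))
    (J : (ℝ → ℝ) × (ℝ → ℝ) × (ℝ → ℝ) → ℝ)
    (hJ : ∀ p, J p = ∫ ζ in (0:ℝ)..1, F ζ (p.1 ζ) (p.2.1 ζ) (p.2.2 ζ))
    (Γ Γm : Set ((ℝ → ℝ) × (ℝ → ℝ) × (ℝ → ℝ)))
    (hsub : Γm ⊆ Γ)
    (hΓsq : ∀ p ∈ Γ,
      (Measurable p.1 ∧ Measurable p.2.1 ∧ Measurable p.2.2) ∧
      IntegrableOn (fun ζ => (p.1 ζ) ^ 2) (Set.Icc 0 1) ∧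
      IntegrableOn (fun ζ => (p.2.1 ζ) ^ 2) (Set.Icc 0 1) ∧
      IntegrableOn (fun ζ => (p.2.2 ζ) ^ 2) (Set.Icc 0 1))
    (mhat : ℕ) (hmhat : 1 ≤ mhat)
    (M₁ M₂ M₃ : ℝ) (hM₁ : 0 ≤ M₁) (hM₂ : 0 ≤ M₂) (hM₃ : 0 ≤ M₃)
    (zs : (ℝ → ℝ) × (ℝ → ℝ) × (ℝ → ℝ)) (hzsmem : zs ∈ Γ)
    (hmin : IsLeast (J '' Γ) (J zs))
    (zh : (ℝ → ℝ) × (ℝ → ℝ) × (ℝ → ℝ)) (hzhmem : zh ∈ Γm)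
    (h₁ : Real.sqrt (∫ ζ in (0:ℝ)..1, (zs.1 ζ - zh.1 ζ) ^ 2)
      ≤ M₁ / (mhat.factorial * 2 ^ (2 * mhat - 1)))
    (h₂ : Real.sqrt (∫ ζ in (0:ℝ)..1, (zs.2.1 ζ - zh.2.1 ζ) ^ 2)
      ≤ M₂ / (mhat.factorial * 2 ^ (2 * mhat - 1)))
    (h₃ : Real.sqrt (∫ ζ in (0:ℝ)..1, (zs.2.2 ζ - zh.2.2 ζ) ^ 2)
      ≤ M₃ / (mhat.factorial * 2 ^ (2 * mhat - 1))) :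
    0 ≤ sInf (J '' Γm) - sInf (J '' Γ) ∧
    sInf (J '' Γm) - sInf (J '' Γ)
      ≤ L * (M₁ + M₂ + M₃) / (mhat.factorial * 2 ^ (2 * mhat - 1)) := by
  classical
  set D : ℝ := (mhat.factorial : ℝ) * 2 ^ (2 * mhat - 1) with hD
  have hD0 : 0 < D := by
    have := mhat.factorial_pos
    positivity
  -- sInf over Γ is attained at zs
  have hIeq : sInf (J '' Γ) = J zs := hmin.csInf_eq
  have hnem : (J '' Γm).Nonempty := ⟨J zh, Set.mem_image_of_mem _ hzhmem⟩
  have hlb : ∀ y ∈ J '' Γm, J zs ≤ y := fun y hy =>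
    hmin.2 (Set.image_mono hsub hy)
  have hbdd : BddBelow (J '' Γm) := ⟨J zs, fun y hy => hlb y hy⟩
  have hlow : J zs ≤ sInf (J '' Γm) := le_csInf hnem hlb
  have hup : sInf (J '' Γm) ≤ J zh := csInf_le hbdd ⟨zh, hzhmem, rfl⟩
  -- projection onto [0,1]
  set π : ℝ → ℝ := fun ζ => max 0 (min 1 ζ) with hπdef
  have hπ : Measurable π := by fun_prop
  have hπmem : ∀ ζ, π ζ ∈ Set.Icc (0:ℝ) 1 := fun ζ =>
    ⟨le_max_left _ _, max_le (by norm_num) (min_le_left _ _)⟩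
  have hπid : ∀ ζ ∈ Set.Ioc (0:ℝ) 1, π ζ = ζ := by
    intro ζ hζ
    simp only [hπdef]
    rw [min_eq_right hζ.2, max_eq_right hζ.1.le]
  -- the uncurried modified integrand is measurable
  have hGcont : ∀ ζ : ℝ, Continuous fun v : ℝ × ℝ × ℝ => F (π ζ) v.1 v.2.1 v.2.2 := by
    intro ζ
    refine (LipschitzWith.of_dist_le_mul (K := ⟨3 * L, by positivity⟩) ?_).continuous
    intro v w
    have h1 : |v.1 - w.1| ≤ dist v w := by
      rw [← Real.dist_eq, Prod.dist_eq]; exact le_max_left _ _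
    have h2 : |v.2.1 - w.2.1| ≤ dist v w := by
      rw [← Real.dist_eq]
      calc dist v.2.1 w.2.1 ≤ dist v.2 w.2 := by rw [Prod.dist_eq]; exact le_max_left _ _
        _ ≤ dist v w := by rw [Prod.dist_eq]; exact le_max_right _ _
    have h3 : |v.2.2 - w.2.2| ≤ dist v w := by
      rw [← Real.dist_eq]
      calc dist v.2.2 w.2.2 ≤ dist v.2 w.2 := by rw [Prod.dist_eq]; exact le_max_right _ _
        _ ≤ dist v w := by rw [Prod.dist_eq]; exact le_max_right _ _
    have hd0 : 0 ≤ dist v w := dist_nonneg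
    have := hLip (π ζ) (hπmem ζ) v.1 v.2.1 v.2.2 w.1 w.2.1 w.2.2
    rw [Real.dist_eq]
    calc |F (π ζ) v.1 v.2.1 v.2.2 - F (π ζ) w.1 w.2.1 w.2.2|
        ≤ L * (|v.1 - w.1| + |v.2.1 - w.2.1| + |v.2.2 - w.2.2|) := this
      _ ≤ L * (dist v w + dist v w + dist v w) := by
          apply mul_le_mul_of_nonneg_left (by linarith) hL.le
      _ = (3 * L) * dist v w := by ring
  have hGm : ∀ v : ℝ × ℝ × ℝ, Measurable fun ζ => F (π ζ) v.1 v.2.1 v.2.2 :=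
    fun v => (hmeas v.1 v.2.1 v.2.2).comp hπ
  have huncurry : Measurable
      (Function.uncurry fun (v : ℝ × ℝ × ℝ) (ζ : ℝ) => F (π ζ) v.1 v.2.1 v.2.2) :=
    measurable_uncurry_of_continuous_of_measurable (fun ζ => hGcont ζ) hGm
  -- measurability and integrability of composites, for any p ∈ Γ
  have hcomp : ∀ p ∈ Γ,
      Measurable (fun ζ => F (π ζ) (p.1 ζ) (p.2.1 ζ) (p.2.2 ζ)) ∧
      IntegrableOn (fun ζ => F (π ζ) (p.1 ζ) (p.2.1 ζ) (p.2.2 ζ)) (Set.Ioc 0 1) := by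
    intro p hp
    obtain ⟨⟨hm1, hm2, hm3⟩, hs1, hs2, hs3⟩ := hΓsq p hp
    have hmc : Measurable (fun ζ => F (π ζ) (p.1 ζ) (p.2.1 ζ) (p.2.2 ζ)) := by
      have : (fun ζ => F (π ζ) (p.1 ζ) (p.2.1 ζ) (p.2.2 ζ)) =
          (Function.uncurry fun (v : ℝ × ℝ × ℝ) (ζ : ℝ) => F (π ζ) v.1 v.2.1 v.2.2) ∘
            (fun ζ => ((p.1 ζ, p.2.1 ζ, p.2.2 ζ), ζ)) := rfl
      rw [this]
      exact huncurry.comp (((hm1.prodMk (hm2.prodMk hm3))).prodMk measurable_id)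
    refine ⟨hmc, ?_⟩
    have ha1 := aux_abs_int p.1 hm1 (hs1.mono_set Set.Ioc_subset_Icc_self)
    have ha2 := aux_abs_int p.2.1 hm2 (hs2.mono_set Set.Ioc_subset_Icc_self)
    have ha3 := aux_abs_int p.2.2 hm3 (hs3.mono_set Set.Ioc_subset_Icc_self)
    have hF0 : IntegrableOn (fun ζ => |F ζ 0 0 0|) (Set.Ioc 0 1) :=
      (hint.mono_set Set.Ioc_subset_Icc_self).abs
    have hg : IntegrableOn
        (fun ζ => |F ζ 0 0 0| + L * (|p.1 ζ| + |p.2.1 ζ| + |p.2.2 ζ|))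
        (Set.Ioc (0:ℝ) 1) :=
      hF0.add (((ha1.add ha2).add ha3).const_mul L)
    refine Integrable.mono' hg hmc.aestronglyMeasurable ?_
    filter_upwards [ae_restrict_mem measurableSet_Ioc] with ζ hζ
    have hLipζ := hLip (π ζ) (hπmem ζ) (p.1 ζ) (p.2.1 ζ) (p.2.2 ζ) 0 0 0
    simp only [sub_zero] at hLipζ
    have hid : π ζ = ζ := hπid ζ hζ
    rw [Real.norm_eq_abs]
    calc |F (π ζ) (p.1 ζ) (p.2.1 ζ) (p.2.2 ζ)|
        ≤ |F (π ζ) 0 0 0| + |F (π ζ) (p.1 ζ) (p.2.1 ζ) (p.2.2 ζ) - F (π ζ) 0 0 0| := by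
          have := abs_sub_abs_le_abs_sub (F (π ζ) (p.1 ζ) (p.2.1 ζ) (p.2.2 ζ)) (F (π ζ) 0 0 0)
          linarith [abs_abs (F (π ζ) 0 0 0)]
      _ ≤ |F ζ 0 0 0| + L * (|p.1 ζ| + |p.2.1 ζ| + |p.2.2 ζ|) := by
          rw [hid] at hLipζ ⊢
          linarith
  -- rewrite J as set integrals over Ioc with the projected integrand
  have hJset : ∀ p ∈ Γ, J p = ∫ ζ in Set.Ioc (0:ℝ) 1, F (π ζ) (p.1 ζ) (p.2.1 ζ) (p.2.2 ζ) := by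
    intro p hp
    rw [hJ p, intervalIntegral.integral_of_le (by norm_num : (0:ℝ) ≤ 1)]
    refine setIntegral_congr_fun measurableSet_Ioc fun ζ hζ => ?_
    rw [hπid ζ hζ]
  -- the three difference functions
  obtain ⟨⟨hms1, hms2, hms3⟩, hss1, hss2, hss3⟩ := hΓsq zs hzsmem
  obtain ⟨⟨hmh1, hmh2, hmh3⟩, hsh1, hsh2, hsh3⟩ := hΓsq zh (hsub hzhmem)
  have hdiffsq : ∀ (f g : ℝ → ℝ), Measurable f → Measurable g →
      IntegrableOn (fun ζ => f ζ ^ 2) (Set.Icc 0 1) →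
      IntegrableOn (fun ζ => g ζ ^ 2) (Set.Icc 0 1) →
      IntegrableOn (fun ζ => (f ζ - g ζ) ^ 2) (Set.Ioc (0:ℝ) 1) := by
    intro f g hf hg hf2 hg2
    have hgg : IntegrableOn (fun ζ => 2 * f ζ ^ 2 + 2 * g ζ ^ 2) (Set.Ioc (0:ℝ) 1) :=
      ((hf2.mono_set Set.Ioc_subset_Icc_self).const_mul 2).add
        ((hg2.mono_set Set.Ioc_subset_Icc_self).const_mul 2)
    refine Integrable.mono' hgg ((hf.sub hg).pow_const 2).aestronglyMeasurable ?_
    refine Filter.Eventually.of_forall fun ζ => ?_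
    rw [Real.norm_eq_abs, abs_of_nonneg (sq_nonneg _)]
    nlinarith [sq_nonneg (f ζ + g ζ)]
  have hd1 := hdiffsq zs.1 zh.1 hms1 hmh1 hss1 hsh1
  have hd2 := hdiffsq zs.2.1 zh.2.1 hms2 hmh2 hss2 hsh2
  have hd3 := hdiffsq zs.2.2 zh.2.2 hms3 hmh3 hss3 hsh3
  have hab1 := aux_int_abs_le_sqrt _ (hms1.sub hmh1) hd1
  have hab2 := aux_int_abs_le_sqrt _ (hms2.sub hmh2) hd2
  have hab3 := aux_int_abs_le_sqrt _ (hms3.sub hmh3) hd3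
  rw [intervalIntegral.integral_of_le (by norm_num : (0:ℝ) ≤ 1)] at h₁ h₂ h₃
  -- main estimate : J zh - J zs ≤ L * (M₁+M₂+M₃)/D
  obtain ⟨hmzs, hizs⟩ := hcomp zs hzsmem
  obtain ⟨hmzh, hizh⟩ := hcomp zh (hsub hzhmem)
  have hia1 := aux_abs_int _ (hms1.sub hmh1) hd1
  have hia2 := aux_abs_int _ (hms2.sub hmh2) hd2
  have hia3 := aux_abs_int _ (hms3.sub hmh3) hd3
  have hkey : J zh - J zs ≤ L * (M₁ + M₂ + M₃) / D := by
    rw [hJset zh (hsub hzhmem), hJset zs hzsmem, ← integral_sub hizh hizs]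
    have hmono : ∫ ζ in Set.Ioc (0:ℝ) 1,
        (F (π ζ) (zh.1 ζ) (zh.2.1 ζ) (zh.2.2 ζ) - F (π ζ) (zs.1 ζ) (zs.2.1 ζ) (zs.2.2 ζ))
        ≤ ∫ ζ in Set.Ioc (0:ℝ) 1,
          L * (|zs.1 ζ - zh.1 ζ| + |zs.2.1 ζ - zh.2.1 ζ| + |zs.2.2 ζ - zh.2.2 ζ|) := by
      refine integral_mono (hizh.sub hizs) (((hia1.add hia2).add hia3).const_mul L)
        fun ζ => ?_
      have hLipζ := hLip (π ζ) (hπmem ζ) (zh.1 ζ) (zh.2.1 ζ) (zh.2.2 ζ)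
        (zs.1 ζ) (zs.2.1 ζ) (zs.2.2 ζ)
      have habs := le_abs_self
        (F (π ζ) (zh.1 ζ) (zh.2.1 ζ) (zh.2.2 ζ) - F (π ζ) (zs.1 ζ) (zs.2.1 ζ) (zs.2.2 ζ))
      have e1 : |zh.1 ζ - zs.1 ζ| = |zs.1 ζ - zh.1 ζ| := abs_sub_comm _ _
      have e2 : |zh.2.1 ζ - zs.2.1 ζ| = |zs.2.1 ζ - zh.2.1 ζ| := abs_sub_comm _ _
      have e3 : |zh.2.2 ζ - zs.2.2 ζ| = |zs.2.2 ζ - zh.2.2 ζ| := abs_sub_comm _ _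
      rw [e1, e2, e3] at hLipζ
      linarith
    refine hmono.trans ?_
    rw [integral_const_mul]
    have e1 := integral_add (hia1.add hia2) hia3
    have e2 := integral_add hia1 hia2
    simp only [Pi.add_apply, Pi.sub_apply] at e1 e2
    rw [e1, e2]
    have b1 : ∫ ζ in Set.Ioc (0:ℝ) 1, |zs.1 ζ - zh.1 ζ| ≤ M₁ / D := hab1.trans h₁
    have b2 : ∫ ζ in Set.Ioc (0:ℝ) 1, |zs.2.1 ζ - zh.2.1 ζ| ≤ M₂ / D := hab2.trans h₂
    have b3 : ∫ ζ in Set.Ioc (0:ℝ) 1, |zs.2.2 ζ - zh.2.2 ζ| ≤ M₃ / D := hab3.trans h₃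
    calc L * ((∫ ζ in Set.Ioc (0:ℝ) 1, |zs.1 ζ - zh.1 ζ|)
          + (∫ ζ in Set.Ioc (0:ℝ) 1, |zs.2.1 ζ - zh.2.1 ζ|)
          + (∫ ζ in Set.Ioc (0:ℝ) 1, |zs.2.2 ζ - zh.2.2 ζ|))
        ≤ L * (M₁ / D + M₂ / D + M₃ / D) := by
          apply mul_le_mul_of_nonneg_left (by linarith) hL.le
      _ = L * (M₁ + M₂ + M₃) / D := by field_simp
  constructor
  · rw [hIeq]; linarith
  · rw [hIeq]
    calc sInf (J '' Γm) - J zs ≤ J zh - J zs := by linarith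
      _ ≤ L * (M₁ + M₂ + M₃) / D := hkey
end
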